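/- arXiv:1605.01264 — 5 statements merged into one kernel-verified Lean document; each statement's English description precedes it below -/
import Mathlib

section
/- Let G be a finite group such that (G, Z(G)) is a generalized Camina pair. Then G' ⊆ Z(G), i.e., G is nilpotent of class at most 2. -/
open scoped BigOperators

/-- `χ : G → ℂ` is an irreducible (complex) character of `G`. -/
def IsIrrChar (G : Type) [Group G] (χ : G → ℂ) : Prop :=
  ∃ V : FDRep ℂ G, CategoryTheory.Simple V ∧ χ = V.character

/-- The commutator `[a,b] = a⁻¹ b⁻¹ a b`. -/
def wcomm {G : Type} [Group G] (a b : G) : G := a⁻¹ * b⁻¹ * a * b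

/-- The left-normed iterated commutator word
`w_n(x₁,…,xₙ) = [⋯[[x₁,x₂],x₃],⋯,xₙ]` (for `n = 0` we set it to `1`). -/
def wIter {G : Type} [Group G] : (n : ℕ) → (Fin n → G) → G
  | 0, _ => 1
  | (n+1), x => (List.ofFn fun i : Fin n => x i.succ).foldl wcomm (x 0)

namespace GCPaux

open MonoidAlgebra CategoryTheory
set_option linter.unusedSectionVars false
noncomputable section

variable {G : Type} [Group G] [Fintype G]

/-- subrepresentation of an FDRep on an invariant subspace -/
def subFD (V : FDRep ℂ G) (p : Submodule ℂ V) (hp : ∀ g : G, ∀ x ∈ p, V.ρ g x ∈ p) :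
    FDRep ℂ G :=
  FDRep.of (G := G) (V := ↥p)
    { toFun := fun g => (V.ρ g).restrict (fun x hx => hp g x hx)
      map_one' := by ext x; simp
      map_mul' := fun g h => by ext x; simp }

def subFDHom (V : FDRep ℂ G) (p : Submodule ℂ V) (hp : ∀ g : G, ∀ x ∈ p, V.ρ g x ∈ p) :
    subFD V p hp ⟶ V where
  hom := FGModuleCat.ofHom p.subtype
  comm := fun g => by ext x; rfl

lemma fd_hom_comm {X Y : FDRep ℂ G} (f : Y ⟶ X) (g : G) (x : ↑Y.V) :
    f.hom (Y.ρ g x) = X.ρ g (f.hom x) :=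
  congrArg (fun φ => φ.hom.hom x) (f.comm g)

lemma mono_ker {X Y : FDRep ℂ G} (f : Y ⟶ X) [Mono f] :
    LinearMap.ker (f.hom.hom.hom : ↑Y.V →ₗ[ℂ] ↑X.V) = ⊥ := by
  have hp : ∀ g : G, ∀ x ∈ LinearMap.ker f.hom.hom.hom, Y.ρ g x ∈ LinearMap.ker f.hom.hom.hom := by
    intro g x hx
    rw [LinearMap.mem_ker] at hx ⊢
    exact (fd_hom_comm f g x).trans (by erw [hx, map_zero])
  have h0 : subFDHom Y _ hp ≫ f = 0 ≫ f := by
    rw [Limits.zero_comp]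
    apply Action.hom_ext
    ext x
    show f.hom ((Submodule.subtype _) x) = (0 : subFD Y _ hp ⟶ X).hom x
    rw [Action.zero_hom]
    exact LinearMap.mem_ker.mp x.2
  have := (cancel_mono f).mp h0
  ext x
  constructor
  · intro hx
    have h2 : (subFDHom Y _ hp).hom ⟨x, hx⟩ = (0 : subFD Y _ hp ⟶ Y).hom ⟨x, hx⟩ := by rw [this]
    rw [Action.zero_hom] at h2
    exact h2
  · intro hx; simp at hx; simp [hx]

instance : FiniteDimensional ℂ (MonoidAlgebra ℂ G) := Module.Finite.of_basis (MonoidAlgebra.basis G ℂ)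

def Lmul (g : G) : MonoidAlgebra ℂ G →ₗ[ℂ] MonoidAlgebra ℂ G :=
  LinearMap.mulLeft ℂ (MonoidAlgebra.single g 1)

variable (W : Submodule (MonoidAlgebra ℂ G) (MonoidAlgebra ℂ G))

instance : FiniteDimensional ℂ ↥W := inferInstanceAs (FiniteDimensional ℂ ↥(W.restrictScalars ℂ))

abbrev WC : Submodule ℂ (MonoidAlgebra ℂ G) := W.restrictScalars ℂ

lemma Lmul_mapsTo (g : G) : ∀ x ∈ WC W, Lmul g x ∈ WC W := by
  intro x hx
  have := W.smul_mem (MonoidAlgebra.single g (1:ℂ)) hx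
  rwa [smul_eq_mul] at this

/-- the representation of `G` on an `ℂ[G]`-submodule of `ℂ[G]`. -/
def subRep : Representation ℂ G ↥(WC W) where
  toFun g := (Lmul g).restrict (Lmul_mapsTo W g)
  map_one' := by
    refine LinearMap.ext fun x => Subtype.ext ?_
    show (MonoidAlgebra.single (1:G) (1:ℂ)) * x.1 = x.1
    rw [← MonoidAlgebra.one_def, one_mul]
  map_mul' g h := by
    refine LinearMap.ext fun x => Subtype.ext ?_
    show (MonoidAlgebra.single (g*h) (1:ℂ)) * x.1
      = (MonoidAlgebra.single g (1:ℂ)) * ((MonoidAlgebra.single h (1:ℂ)) * x.1)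
    rw [← mul_assoc, MonoidAlgebra.single_mul_single, mul_one]

instance : Module (MonoidAlgebra ℂ G) ↥(WC W) := inferInstanceAs (Module (MonoidAlgebra ℂ G) ↥W)

lemma subRep_smul (g : G) (x : ↥(WC W)) :
    subRep W g x = (MonoidAlgebra.single g (1:ℂ)) • x := by
  apply Subtype.ext
  show (MonoidAlgebra.single g (1:ℂ)) * x.1 = (MonoidAlgebra.single g (1:ℂ)) • x.1
  rw [smul_eq_mul]

/-- a `G`-invariant subspace of `W` is an `ℂ[G]`-submodule. -/
def toASub (p : Submodule ℂ ↥(WC W)) (hp : ∀ g : G, ∀ x ∈ p, subRep W g x ∈ p) :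
    Submodule (MonoidAlgebra ℂ G) ↥(WC W) where
  carrier := p
  add_mem' := fun ha hb => p.add_mem ha hb
  zero_mem' := p.zero_mem
  smul_mem' := by
    intro a x hx
    show a • x ∈ p
    induction a using MonoidAlgebra.induction_on with
    | of g =>
        have : (MonoidAlgebra.of ℂ G g) • x = subRep W g x := (subRep_smul W g x).symm
        rw [this]; exact hp g x hx
    | add a b ha hb => rw [add_smul]; exact p.add_mem ha hb
    | smul c a ha => rw [smul_assoc]; exact p.smul_mem c ha

def FDW : FDRep ℂ G := FDRep.of (subRep W)

lemma FDW_ρ (g : G) : (FDW W).ρ g = subRep W g := rfl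

lemma FDW_simple (hW : IsSimpleModule (MonoidAlgebra ℂ G) ↥(WC W)) : Simple (FDW W) := by
  haveI := hW
  haveI : Nontrivial ↥(WC W) := IsSimpleModule.nontrivial (MonoidAlgebra ℂ G) ↥(WC W)
  constructor
  intro Y f hm
  constructor
  · intro hiso hzero
    subst hzero
    have h1 : inv (0 : Y ⟶ FDW W) ≫ (0 : Y ⟶ FDW W) = 𝟙 (FDW W) := IsIso.inv_hom_id _
    rw [Limits.comp_zero] at h1
    have h2 := congrArg Action.Hom.hom h1.symm
    rw [Action.zero_hom, Action.id_hom] at h2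
    obtain ⟨w, hw⟩ := exists_ne (0 : ↥(WC W))
    have hw0 : w = 0 := congrArg (fun φ => φ.hom.hom w) h2
    exact hw hw0
  · intro hne
    have hker := mono_ker f
    have hinj : Function.Injective (f.hom.hom.hom : ↑Y.V →ₗ[ℂ] ↑(FDW W).V) := by
      rw [← LinearMap.ker_eq_bot]; exact hker
    set p := LinearMap.range (f.hom.hom.hom : ↑Y.V →ₗ[ℂ] ↑(FDW W).V) with hpdef
    have hp : ∀ g : G, ∀ x ∈ p, subRep W g x ∈ p := by
      intro g x hx
      obtain ⟨y, rfl⟩ := hx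
      exact ⟨Y.ρ g y, fd_hom_comm f g y⟩
    rcases eq_bot_or_eq_top (toASub W p hp) with hbot | htop
    · exfalso
      apply hne
      apply Action.hom_ext
      apply FGModuleCat.hom_ext
      apply LinearMap.ext
      intro y
      have hy : (f.hom y : ↥(WC W)) ∈ toASub W p hp := ⟨y, rfl⟩
      rw [hbot] at hy
      have hy' := (Submodule.mem_bot (MonoidAlgebra ℂ G) (M := ↥(WC W))).mp hy
      exact hy'
    · have hsurj : Function.Surjective (f.hom.hom.hom : ↑Y.V →ₗ[ℂ] ↑(FDW W).V) := by
        intro x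
        have hx : x ∈ toASub W p hp := by rw [htop]; trivial
        exact hx
      let e : (↑Y.V : Type) ≃ₗ[ℂ] ↥(WC W) := LinearEquiv.ofBijective f.hom.hom.hom ⟨hinj, hsurj⟩
      have he : ∀ y, e y = f.hom.hom.hom y := fun _ => rfl
      refine ⟨⟨{ hom := FGModuleCat.ofHom e.symm.toLinearMap, comm := ?_ }, ?_, ?_⟩⟩
      · intro g
        apply FGModuleCat.hom_ext
        apply LinearMap.ext
        intro x
        show e.symm ((FDW W).ρ g x) = Y.ρ g (e.symm x)
        apply hinj
        rw [← he]; erw [e.apply_symm_apply]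
        have h3 : f.hom.hom.hom (Y.ρ g (e.symm x)) = (FDW W).ρ g (f.hom.hom.hom (e.symm x)) :=
          fd_hom_comm f g (e.symm x)
        have h4 : f.hom.hom.hom (e.symm x) = x := by rw [← he]; erw [e.apply_symm_apply]
        rw [h4] at h3
        exact h3.symm
      · apply Action.hom_ext
        apply FGModuleCat.hom_ext
        apply LinearMap.ext
        intro y
        show e.symm (f.hom.hom.hom y) = y
        rw [← he, e.symm_apply_apply]
      · apply Action.hom_ext
        apply FGModuleCat.hom_ext
        apply LinearMap.ext
        intro x
        show f.hom.hom.hom (e.symm x) = x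
        rw [← he]; erw [e.apply_symm_apply]

def bA : Module.Basis G ℂ (MonoidAlgebra ℂ G) := MonoidAlgebra.basis G ℂ

lemma bA_apply (h : G) : bA (G := G) h = MonoidAlgebra.single h 1 := rfl

lemma trace_Lmul (g : G) (hg : g ≠ 1) : LinearMap.trace ℂ _ (Lmul (G := G) g) = 0 := by
  classical
  rw [LinearMap.trace_eq_matrix_trace ℂ bA, Matrix.trace]
  refine Finset.sum_eq_zero fun h _ => ?_
  rw [Matrix.diag_apply, LinearMap.toMatrix_apply]
  have : (Lmul g) (bA h) = MonoidAlgebra.single (g * h) (1 : ℂ) := by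
    rw [bA_apply, Lmul, LinearMap.mulLeft_apply, MonoidAlgebra.single_mul_single, mul_one]
  rw [this]
  show (Finsupp.single (g*h) (1:ℂ)) h = 0
  rw [Finsupp.single_apply, if_neg (by intro hh; exact hg (by simpa using hh))]

lemma trace_mul_dim_one {M : Type} [AddCommGroup M] [Module ℂ M] [FiniteDimensional ℂ M]
    (h : Module.finrank ℂ M = 1) (f g : M →ₗ[ℂ] M) :
    LinearMap.trace ℂ M (f ∘ₗ g) = LinearMap.trace ℂ M f * LinearMap.trace ℂ M g := by
  classical
  let b : Module.Basis (Fin 1) ℂ M := Module.finBasisOfFinrankEq ℂ M h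
  rw [LinearMap.trace_eq_matrix_trace ℂ b, LinearMap.trace_eq_matrix_trace ℂ b,
    LinearMap.trace_eq_matrix_trace ℂ b, LinearMap.toMatrix_comp b b b]
  rw [Matrix.trace, Matrix.trace, Matrix.trace]
  rw [Fin.sum_univ_one, Fin.sum_univ_one, Fin.sum_univ_one]
  rw [Matrix.diag_apply, Matrix.diag_apply, Matrix.diag_apply, Matrix.mul_apply, Fin.sum_univ_one]

lemma char_dim_one_comm (h1 : Module.finrank ℂ ↥(WC W) = 1) (g : G) (hg : g ∈ commutator G) :
    LinearMap.trace ℂ _ (subRep W g) = 1 := by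
  set t : G → ℂ := fun g => LinearMap.trace ℂ _ (subRep W g) with ht
  have hmul : ∀ a b : G, t (a * b) = t a * t b := by
    intro a b
    have : subRep W (a * b) = (subRep W a) ∘ₗ (subRep W b) := by
      rw [map_mul]; rfl
    rw [ht]; simp only; rw [this, trace_mul_dim_one h1]
  have htone : t 1 = 1 := by
    rw [ht]; simp only [map_one, LinearMap.trace_one, h1, Nat.cast_one]
  have hunit : ∀ a : G, t a * t a⁻¹ = 1 := fun a => by
    rw [← hmul, mul_inv_cancel, htone]
  have hunit' : ∀ a : G, t a⁻¹ * t a = 1 := fun a => by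
    rw [← hmul, inv_mul_cancel, htone]
  let φ : G →* ℂˣ :=
    { toFun := fun a => ⟨t a, t a⁻¹, hunit a, hunit' a⟩
      map_one' := by ext; exact htone
      map_mul' := fun a b => by ext; exact hmul a b }
  have hker : commutator G ≤ φ.ker := by
    rw [commutator, Subgroup.commutator_le]
    intro a _ b _
    rw [MonoidHom.mem_ker, map_commutatorElement]
    exact commutatorElement_eq_one_iff_commute.mpr (mul_comm _ _)
  have := hker hg
  rw [MonoidHom.mem_ker] at this
  have : (φ g).val = 1 := by rw [this]; rfl
  exact this

lemma FDW_char (g : G) : (FDW W).character g = LinearMap.trace ℂ ↥(WC W) (subRep W g) := rfl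

lemma FDW_finrank : Module.finrank ℂ ↥(FDW W) = Module.finrank ℂ ↥(WC W) := rfl

theorem stmt_7' {G : Type} [Group G] [Fintype G]
    (hGCP : ∀ χ : G → ℂ, (∃ V : FDRep ℂ G, CategoryTheory.Simple V ∧ χ = V.character) → χ 1 ≠ 1 →
      ∀ g : G, g ∉ Subgroup.center G → χ g = 0) :
    commutator G ≤ Subgroup.center G := by
  classical
  haveI : NeZero ((Fintype.card G : ℂ)) := ⟨by exact_mod_cast Fintype.card_ne_zero⟩
  by_contra hle
  rw [SetLike.le_def] at hle
  push_neg at hle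
  obtain ⟨g, hgc, hgz⟩ := hle
  have hg1 : g ≠ 1 := fun h => hgz (h ▸ (Subgroup.center G).one_mem)
  obtain ⟨s, hind, hsup, hsimple⟩ :=
    IsSemisimpleModule.exists_sSupIndep_sSup_simples_eq_top (MonoidAlgebra ℂ G) (MonoidAlgebra ℂ G)
  let N : s → Submodule (MonoidAlgebra ℂ G) (MonoidAlgebra ℂ G) := fun i => i.1
  have hindN : iSupIndep N := (sSupIndep_iff s).mp hind
  have hsupN : ⨆ i, N i = ⊤ := by rw [← sSup_eq_iSup']; exact hsup
  haveI : IsNoetherian (MonoidAlgebra ℂ G) (MonoidAlgebra ℂ G) :=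
    isNoetherian_of_tower ℂ inferInstance
  haveI : Finite s := by
    have h := WellFoundedGT.finite_ne_bot_of_iSupIndep hindN
    have huniv : {i : s | N i ≠ ⊥} = Set.univ := by
      ext i
      simp only [Set.mem_setOf_eq, Set.mem_univ, iff_true]
      exact (isSimpleModule_iff_isAtom.mp (hsimple i.1 i.2)).1
    rw [huniv] at h
    exact Set.finite_univ_iff.mp h
  haveI : Fintype s := Fintype.ofFinite _
  have hInternalA : DirectSum.IsInternal N :=
    DirectSum.isInternal_submodule_of_iSupIndep_of_iSup_eq_top hindN hsupN
  -- the invariant vector σ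
  let σ : MonoidAlgebra ℂ G := ∑ h : G, MonoidAlgebra.single h 1
  have hσ0 : σ ≠ 0 := by
    intro h
    have h2 := congrArg (fun x : MonoidAlgebra ℂ G => x.coeff 1) h
    simp only [σ] at h2
    rw [MonoidAlgebra.coeff_sum, Finsupp.finset_sum_apply] at h2
    simp only [MonoidAlgebra.coeff_zero, Finsupp.coe_zero, Pi.zero_apply] at h2
    have : ∀ h : G, (MonoidAlgebra.single h (1:ℂ)).coeff 1 = if h = 1 then 1 else 0 := by
      intro h; rw [MonoidAlgebra.coeff_single]; exact Finsupp.single_apply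
    rw [Finset.sum_congr rfl (fun h _ => this h)] at h2
    rw [Finset.sum_ite_eq' Finset.univ (1:G) (fun _ => (1:ℂ))] at h2
    simp at h2
  have hσg : ∀ a : G, MonoidAlgebra.single a (1:ℂ) * σ = σ := by
    intro a
    rw [Finset.mul_sum]
    refine Fintype.sum_bijective (a * ·) (Group.mulLeft_bijective a) _ _ fun h => ?_
    rw [MonoidAlgebra.single_mul_single, mul_one]
  obtain ⟨m, hm⟩ := hInternalA.2 σ
  have hm0 : m ≠ 0 := by
    intro h; rw [h, map_zero] at hm; exact hσ0 hm.symm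
  obtain ⟨i0, hi0⟩ : ∃ i, m i ≠ 0 := by
    by_contra hc
    push_neg at hc
    exact hm0 (DFinsupp.ext hc)
  have hw : ∀ a : G, MonoidAlgebra.single a (1:ℂ) • (m i0) = m i0 := by
    intro a
    have h1 : (DirectSum.coeAddMonoidHom N) (MonoidAlgebra.single a (1:ℂ) • m) = σ := by
      have e1 : (DirectSum.coeAddMonoidHom N) (MonoidAlgebra.single a (1:ℂ) • m)
          = (DirectSum.coeLinearMap N) (MonoidAlgebra.single a (1:ℂ) • m) := rfl
      have e2 : (DirectSum.coeLinearMap N) m = (DirectSum.coeAddMonoidHom N) m := rfl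
      rw [e1, map_smul, e2, hm, smul_eq_mul, hσg]
    have h2 : MonoidAlgebra.single a (1:ℂ) • m = m := hInternalA.1 (h1.trans hm.symm)
    calc MonoidAlgebra.single a (1:ℂ) • (m i0)
        = (MonoidAlgebra.single a (1:ℂ) • m) i0 := (DFinsupp.smul_apply _ _ _).symm
      _ = m i0 := by rw [h2]
  -- finrank at i0 is one
  have hrank1 : Module.finrank ℂ ↥(WC (N i0)) = 1 := by
    haveI hs := hsimple (N i0) i0.2
    have hspanA : Submodule.span (MonoidAlgebra ℂ G) {m i0} = ⊤ :=
      IsSimpleModule.span_singleton_eq_top (MonoidAlgebra ℂ G) hi0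
    have key : ∀ a : MonoidAlgebra ℂ G, a • (m i0) ∈ Submodule.span ℂ {m i0} := by
      intro a
      induction a using MonoidAlgebra.induction_on with
      | of b =>
          rw [show (MonoidAlgebra.of ℂ G b) • (m i0) = m i0 from hw b]
          exact Submodule.mem_span_singleton_self _
      | add a b ha hb => rw [add_smul]; exact Submodule.add_mem _ ha hb
      | smul c a ha => rw [smul_assoc]; exact Submodule.smul_mem _ c ha
    have hspanC : Submodule.span ℂ {m i0} = (⊤ : Submodule ℂ ↥(N i0)) := by
      rw [eq_top_iff]
      intro x _
      have hx : x ∈ Submodule.span (MonoidAlgebra ℂ G) {m i0} := by rw [hspanA]; trivial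
      obtain ⟨a, rfl⟩ := Submodule.mem_span_singleton.mp hx
      exact key a
    exact (finrank_eq_one_iff_of_nonzero' (m i0) hi0).mpr
      (fun x => Submodule.mem_span_singleton.mp (by rw [hspanC]; trivial))
  -- the ℂ-linear decomposition
  let N' : s → Submodule ℂ (MonoidAlgebra ℂ G) := fun i => WC (N i)
  have hindC : iSupIndep N' := by
    intro i
    rw [disjoint_iff_inf_le]
    intro x hx
    have hbound : (⨆ (j) (_ : j ≠ i), N' j) ≤
        Submodule.restrictScalars ℂ (⨆ (j) (_ : j ≠ i), N j) := by
      refine iSup_le fun j => iSup_le fun hj => ?_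
      intro y hy
      exact Submodule.mem_iSup_of_mem j (Submodule.mem_iSup_of_mem hj hy)
    have hd := hindN i
    rw [disjoint_iff_inf_le] at hd
    have hx' : x ∈ N i ⊓ ⨆ (j) (_ : j ≠ i), N j :=
      Submodule.mem_inf.mpr ⟨(Submodule.mem_inf.mp hx).1, hbound (Submodule.mem_inf.mp hx).2⟩
    have := hd hx'
    simpa using this
  have hsupC : ⨆ i, N' i = ⊤ := by
    rw [eq_top_iff]
    intro x _
    have hx : x ∈ ⨆ i, N i := by rw [hsupN]; trivial
    refine Submodule.iSup_induction (p := N) (motive := fun y => y ∈ ⨆ i, N' i) hx ?_ ?_ ?_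
    · intro i y hy; exact Submodule.mem_iSup_of_mem i hy
    · exact Submodule.zero_mem _
    · intro y z hy hz; exact Submodule.add_mem _ hy hz
  have hInternalC : DirectSum.IsInternal N' :=
    DirectSum.isInternal_submodule_of_iSupIndep_of_iSup_eq_top hindC hsupC
  have hmaps : ∀ i : s, Set.MapsTo (Lmul g) (N' i) (N' i) := fun i x hx => Lmul_mapsTo (N i) g x hx
  have htr := LinearMap.trace_eq_sum_trace_restrict hInternalC hmaps
  rw [trace_Lmul g hg1] at htr
  have hval : ∀ i : s, LinearMap.trace ℂ ↥(N' i) ((Lmul g).restrict (hmaps i))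
      = (if Module.finrank ℂ ↥(WC (N i)) = 1 then (1:ℂ) else 0) := by
    intro i
    have hrfl : (Lmul g).restrict (hmaps i) = subRep (N i) g := rfl
    rw [hrfl]
    by_cases hd : Module.finrank ℂ ↥(WC (N i)) = 1
    · rw [if_pos hd]; exact char_dim_one_comm (N i) hd g hgc
    · rw [if_neg hd]
      haveI hsimp : CategoryTheory.Simple (FDW (N i)) := FDW_simple (N i) (hsimple (N i) i.2)
      have hne : (FDW (N i)).character 1 ≠ 1 := by
        rw [FDRep.char_one]
        intro hc
        exact hd (by exact_mod_cast hc)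
      exact hGCP ((FDW (N i)).character) ⟨FDW (N i), hsimp, rfl⟩ hne g hgz
  rw [Finset.sum_congr rfl (fun i _ => hval i)] at htr
  rw [Finset.sum_boole] at htr
  have hc0 : (Finset.univ.filter (fun i : s => Module.finrank ℂ ↥(WC (N i)) = 1)).card = 0 := by
    exact_mod_cast htr.symm
  have hi0mem : i0 ∈ Finset.univ.filter (fun i : s => Module.finrank ℂ ↥(WC (N i)) = 1) :=
    Finset.mem_filter.mpr ⟨Finset.mem_univ _, hrank1⟩
  rw [Finset.card_eq_zero] at hc0
  rw [hc0] at hi0mem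
  exact absurd hi0mem (Finset.notMem_empty _)

end
end GCPaux

theorem stmt_7 {G : Type} [Group G] [Fintype G]
    (hna : ∃ a b : G, a * b ≠ b * a)
    (hGCP : ∀ χ : G → ℂ, IsIrrChar G χ → χ 1 ≠ 1 →
      ∀ g : G, g ∉ Subgroup.center G → χ g = 0) :
    commutator G ≤ Subgroup.center G := by
  exact GCPaux.stmt_7' (fun χ h hχ1 g hg => hGCP χ h hχ1 g hg)
end

section
/- Let G be a finite group such that (G, Z(G)) is a generalized Camina pair. Then for 1 ≠ g ∈ G', the number of pairs (a,b) ∈ G × G with [a,b] = g equals (|G|²/|G'|)(1 − 1/|G:Z(G)|), and the number of pairs with [a,b] = 1 equals (|G|²/|G'|)(1 + (|G'|−1)/|G:Z(G)|). -/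
open scoped BigOperators
open CategoryTheory MonoidAlgebra LinearMap Module

set_option linter.unusedSectionVars false

section GCP

variable {G : Type} [Group G] [Fintype G]

noncomputable abbrev AA (G : Type) [Group G] : Type := MonoidAlgebra ℂ G

noncomputable instance : NeZero ((Fintype.card G : ℂ)) :=
  ⟨Nat.cast_ne_zero.mpr Fintype.card_ne_zero⟩

noncomputable instance : FiniteDimensional ℂ (AA G) :=
  Module.Finite.of_basis (MonoidAlgebra.basis G ℂ)

theorem monoidAlgebra_eq_sum (x : AA G) :
    x = ∑ g ∈ x.coeff.support, (x.coeff g) • single g (1:ℂ) := by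
  conv_lhs => rw [← MonoidAlgebra.sum_coeff_single x]
  rw [Finsupp.sum]
  exact Finset.sum_congr rfl fun g _ => by rw [MonoidAlgebra.smul_single', mul_one]

/-- trace of left multiplication by `single g 1` on the group algebra. -/
theorem trace_mulLeft_single [DecidableEq G] (g : G) :
    LinearMap.trace ℂ (AA G) (LinearMap.mulLeft ℂ (single g (1:ℂ))) =
      if g = 1 then (Fintype.card G : ℂ) else 0 := by
  classical
  let b : Basis G ℂ (AA G) := MonoidAlgebra.basis G ℂ
  rw [LinearMap.trace_eq_matrix_trace ℂ b, Matrix.trace]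
  have : ∀ j : G, (LinearMap.toMatrix b b (LinearMap.mulLeft ℂ (single g (1:ℂ)))).diag j
      = if g = 1 then 1 else 0 := by
    intro j
    rw [Matrix.diag_apply, LinearMap.toMatrix_apply]
    have hb : b j = single j (1:ℂ) := rfl
    rw [hb, LinearMap.mulLeft_apply, MonoidAlgebra.single_mul_single, one_mul]
    have h2 : (b.repr (single (g*j) (1:ℂ))) j = if g*j = j then 1 else 0 := by
      show (MonoidAlgebra.single (g*j) (1:ℂ)).coeff j = _
      rw [MonoidAlgebra.coeff_single_apply]
    rw [h2]
    simp only [mul_eq_right]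
  simp only [this]
  split <;> simp [Finset.card_univ]

/-- the class-sum-type central element `∑_b b⁻¹ a b`. -/
noncomputable def cel (a : G) : AA G := ∑ b : G, single (b⁻¹ * a * b) (1:ℂ)

theorem cel_commute (a : G) (x : AA G) : x * cel a = cel a * x := by
  classical
  have hsingle : ∀ g : G, single g (1:ℂ) * cel a = cel a * single g (1:ℂ) := by
    intro g
    rw [cel, Finset.mul_sum, Finset.sum_mul]
    rw [← Equiv.sum_comp (Equiv.mulRight g⁻¹) (fun b => single (b⁻¹ * a * b) (1:ℂ) * single g 1)]
    apply Finset.sum_congr rfl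
    intro b _
    simp only [Equiv.coe_mulRight, MonoidAlgebra.single_mul_single, one_mul, mul_one]
    congr 1
    group
  conv_lhs => rw [monoidAlgebra_eq_sum x]
  conv_rhs => rw [monoidAlgebra_eq_sum x]
  rw [Finset.sum_mul, Finset.mul_sum]
  apply Finset.sum_congr rfl
  intro g _
  rw [smul_mul_assoc, mul_smul_comm, hsingle]

theorem trace_mulLeft_cel [DecidableEq G] (a g : G) :
    LinearMap.trace ℂ (AA G) (LinearMap.mulLeft ℂ (cel a * single g (1:ℂ))) =
      (Fintype.card G : ℂ) *
        ((Finset.univ.filter fun b : G => b⁻¹ * a * b = g⁻¹).card : ℂ) := by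
  classical
  have h1 : cel a * single g (1:ℂ) = ∑ b : G, single (b⁻¹ * a * b * g) (1:ℂ) := by
    rw [cel, Finset.sum_mul]
    exact Finset.sum_congr rfl fun b _ => by
      rw [MonoidAlgebra.single_mul_single, one_mul]
  have h2 : LinearMap.mulLeft ℂ (cel a * single g (1:ℂ)) =
      ∑ b : G, LinearMap.mulLeft ℂ (single (b⁻¹ * a * b * g) (1:ℂ)) := by
    ext y
    simp [h1, Finset.sum_mul, LinearMap.sum_apply]
  rw [h2, map_sum]
  have h3 : ∀ b : G, LinearMap.trace ℂ (AA G)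
      (LinearMap.mulLeft ℂ (single (b⁻¹ * a * b * g) (1:ℂ))) =
      if b⁻¹ * a * b = g⁻¹ then (Fintype.card G : ℂ) else 0 := by
    intro b
    rw [trace_mulLeft_single]
    simp only [mul_eq_one_iff_eq_inv]
  simp only [h3]
  rw [Finset.sum_ite, Finset.sum_const, Finset.sum_const_zero, add_zero, nsmul_eq_mul, mul_comm]

/-- Restriction of a representation to an invariant subspace. -/
noncomputable def resRep (Y : FDRep ℂ G) (K : Submodule ℂ Y)
    (hK : ∀ (g : G), ∀ w ∈ K, Y.ρ g w ∈ K) : Representation ℂ G K where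
  toFun g := (Y.ρ g).restrict (fun x hx => hK g x hx)
  map_one' := by
    apply LinearMap.ext; intro x
    apply Subtype.ext
    simp [LinearMap.restrict_apply]
  map_mul' g h := by
    apply LinearMap.ext; intro x
    apply Subtype.ext
    simp [LinearMap.restrict_apply]

/-- If a finite-dimensional representation is nontrivial and has no nontrivial invariant
subspaces, it is simple as an object of `FDRep ℂ G`. -/
theorem fdrep_simple_of_invariant (X : FDRep ℂ G)
    (hnt : ∃ x : X, x ≠ 0)
    (hsub : ∀ W : Submodule ℂ X, (∀ (g : G), ∀ w ∈ W, X.ρ g w ∈ W) → W = ⊥ ∨ W = ⊤) :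
    Simple X := by
  constructor
  intro Y f hf
  constructor
  · intro hiso h0
    obtain ⟨x, hx⟩ := hnt
    have : (CategoryTheory.inv f ≫ f) = 𝟙 X := by simp
    have hx' : x = 0 := by
      have := congrArg (fun φ => φ.hom x) this
      simp only [h0] at this
      have h3 := this.symm
      simp at h3
      exact h3.trans rfl
    exact hx hx'
  · intro h0
    have hcomm : ∀ g : G, ∀ y : Y, f.hom (Y.ρ g y) = X.ρ g (f.hom y) := by
      intro g y
      have := congrArg (fun φ => φ y) (f.comm g)
      exact this
    have hinj : Function.Injective f.hom := by
      set K : Submodule ℂ Y := LinearMap.ker f.hom.hom.hom with hKdef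
      have hK : ∀ (g : G), ∀ w ∈ K, Y.ρ g w ∈ K := by
        intro g w hw
        have : f.hom (Y.ρ g w) = 0 := by
          rw [hcomm g w]
          have : f.hom w = 0 := hw
          rw [this, map_zero]
        exact this
      let Z : FDRep ℂ G := FDRep.of (resRep Y K hK)
      let ι : Z ⟶ Y := ⟨InducedCategory.homMk (ModuleCat.ofHom (K.subtype : K →ₗ[ℂ] Y.V.obj)), by
        intro g
        ext x
        rfl⟩
      have hcomp : ι ≫ f = (0 : Z ⟶ Y) ≫ f := by
        rw [Limits.zero_comp]
        apply Action.Hom.ext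
        ext ⟨x, hx⟩
        exact hx
      have hι : ι = 0 := (cancel_mono f).mp hcomp
      rw [← LinearMap.ker_eq_bot]
      rw [Submodule.eq_bot_iff]
      intro x hx
      have h2 : ι.hom ⟨x, hx⟩ = 0 := by rw [hι]; rfl
      exact h2
    have hsurj : Function.Surjective f.hom := by
      have hW : ∀ (g : G), ∀ w ∈ LinearMap.range f.hom.hom.hom,
          X.ρ g w ∈ LinearMap.range f.hom.hom.hom := by
        rintro g w ⟨y, rfl⟩
        exact ⟨Y.ρ g y, hcomm g y⟩
      rcases hsub _ hW with h | h
      · exfalso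
        apply h0
        apply Action.Hom.ext
        ext y
        have : f.hom y ∈ (⊥ : Submodule ℂ X) := h ▸ LinearMap.mem_range_self _ y
        simp at this ⊢
        exact this
      · intro x
        have : x ∈ LinearMap.range f.hom.hom.hom := h ▸ trivial
        exact this
    let e : Y.V.obj ≃ₗ[ℂ] X.V.obj := LinearEquiv.ofBijective f.hom.hom.hom ⟨hinj, hsurj⟩
    refine ⟨⟨⟨InducedCategory.homMk (ModuleCat.ofHom (e.symm : X.V.obj →ₗ[ℂ] Y.V.obj)), ?_⟩, ?_, ?_⟩⟩
    · intro g
      ext x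
      apply hinj
      show f.hom (e.symm (X.ρ g x)) = f.hom (Y.ρ g (e.symm x))
      rw [hcomm]
      have h1 : ∀ z, f.hom (e.symm z) = z := fun z => e.apply_symm_apply z
      rw [h1, h1]
    · apply Action.Hom.ext
      ext y
      show e.symm (f.hom y) = y
      exact e.symm_apply_apply y
    · apply Action.Hom.ext
      ext x
      show f.hom (e.symm x) = x
      exact e.apply_symm_apply x

variable (P : Submodule (AA G) (AA G))

theorem mapsTo_mulLeft (x : AA G) :
    Set.MapsTo (LinearMap.mulLeft ℂ x) (P.restrictScalars ℂ : Set (AA G))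
      (P.restrictScalars ℂ : Set (AA G)) := fun y hy => by
  have : y ∈ P := hy
  exact P.smul_mem x this

/-- The representation of `G` on a left ideal of the group algebra. -/
noncomputable def rhoP : Representation ℂ G ↥(P.restrictScalars ℂ) where
  toFun g := (LinearMap.mulLeft ℂ (single g (1:ℂ))).restrict (mapsTo_mulLeft P _)
  map_one' := by
    apply LinearMap.ext; intro x
    apply Subtype.ext
    show single (1:G) (1:ℂ) * x.1 = x.1
    rw [← MonoidAlgebra.one_def, one_mul]
  map_mul' g h := by
    apply LinearMap.ext; intro x
    apply Subtype.ext
    show single (g*h) (1:ℂ) * x.1 = single g (1:ℂ) * (single h (1:ℂ) * x.1)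
    rw [← mul_assoc, MonoidAlgebra.single_mul_single, one_mul]

/-- The representation on a left ideal, as an `FDRep`. -/
noncomputable def XP : FDRep ℂ G := FDRep.of (rhoP P)

theorem XP_character (g : G) :
    (XP P).character g =
      LinearMap.trace ℂ ↥(P.restrictScalars ℂ)
        ((LinearMap.mulLeft ℂ (single g (1:ℂ))).restrict (mapsTo_mulLeft P _)) := rfl

variable {P}

theorem exists_ne_zero (hP : IsSimpleModule (AA G) ↥P) : ∃ y : ↥P, y ≠ 0 := by
  by_contra h
  push_neg at h
  have : (⊥ : Submodule (AA G) ↥P) = ⊤ := by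
    rw [eq_top_iff]
    intro y _
    simp [h y]
  exact (bot_ne_top : (⊥ : Submodule (AA G) ↥P) ≠ ⊤) this

/-- Schur: the central element `cel a` acts by a scalar on a simple left ideal. -/
theorem cel_scalar (a : G) (hP : IsSimpleModule (AA G) ↥P) :
    ∃ μ : ℂ, ∀ y ∈ P, cel a * y = μ • y := by
  obtain ⟨y0, hy0⟩ := exists_ne_zero hP
  haveI : Nontrivial ↥(P.restrictScalars ℂ) := by
    refine ⟨⟨y0.1, y0.2⟩, 0, ?_⟩
    intro h
    apply hy0
    apply Subtype.ext
    exact congrArg Subtype.val h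
  set f : Module.End ℂ ↥(P.restrictScalars ℂ) :=
    (LinearMap.mulLeft ℂ (cel a)).restrict (mapsTo_mulLeft P _) with hf
  obtain ⟨μ, hμ⟩ := Module.End.exists_eigenvalue f
  obtain ⟨v, hv⟩ := hμ.exists_hasEigenvector
  have hvP : cel a * v.1 = μ • v.1 := by
    have := hv.apply_eq_smul
    have h2 := congrArg Subtype.val this
    exact h2
  let Q : Submodule (AA G) ↥P :=
    { carrier := {y | cel a * y.1 = μ • y.1}
      add_mem' := by
        intro y z hy hz
        show cel a * (y.1 + z.1) = μ • (y.1 + z.1)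
        rw [mul_add, hy, hz, smul_add]
      zero_mem' := by
        show cel a * (0:AA G) = μ • (0:AA G)
        simp
      smul_mem' := by
        intro x y hy
        show cel a * (x • y.1) = μ • (x • y.1)
        have : x • y.1 = x * y.1 := rfl
        rw [this, ← mul_assoc, ← cel_commute, mul_assoc, hy, mul_smul_comm] }
  have hQ : Q ≠ ⊥ := by
    intro h
    have hvQ : (⟨v.1, v.2⟩ : ↥P) ∈ Q := hvP
    rw [h, Submodule.mem_bot] at hvQ
    exact hv.2 (by
      apply Subtype.ext
      exact congrArg Subtype.val hvQ)
  haveI := hP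
  rcases eq_bot_or_eq_top Q with h | h
  · exact absurd h hQ
  · refine ⟨μ, fun y hy => ?_⟩
    have : (⟨y, hy⟩ : ↥P) ∈ Q := h ▸ Submodule.mem_top
    exact this

theorem trace_restrict_cel_single (a g : G) (μ : ℂ) (hμ : ∀ y ∈ P, cel a * y = μ • y) :
    LinearMap.trace ℂ ↥(P.restrictScalars ℂ)
      ((LinearMap.mulLeft ℂ (cel a * single g (1:ℂ))).restrict (mapsTo_mulLeft P _)) =
      μ * (XP P).character g := by
  have heq : (LinearMap.mulLeft ℂ (cel a * single g (1:ℂ))).restrict (mapsTo_mulLeft P _) =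
      μ • ((LinearMap.mulLeft ℂ (single g (1:ℂ))).restrict (mapsTo_mulLeft P _)) := by
    apply LinearMap.ext
    intro y
    apply Subtype.ext
    show (cel a * single g (1:ℂ)) * y.1 = μ • (single g (1:ℂ) * y.1)
    rw [mul_assoc]
    exact hμ _ (P.smul_mem _ y.2)
  rw [heq, map_smul, smul_eq_mul, XP_character]

theorem mu_spec (a : G) (μ : ℂ) (hμ : ∀ y ∈ P, cel a * y = μ • y) :
    μ * (XP P).character 1 = (Fintype.card G : ℂ) * (XP P).character a := by
  classical
  have h1 : LinearMap.trace ℂ ↥(P.restrictScalars ℂ)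
      ((LinearMap.mulLeft ℂ (cel a)).restrict (mapsTo_mulLeft P _)) =
      μ * (XP P).character 1 := by
    have := trace_restrict_cel_single a 1 μ hμ
    rw [← this]
    congr 2
    rw [← MonoidAlgebra.one_def, mul_one]
  rw [← h1]
  have h2 : (LinearMap.mulLeft ℂ (cel a)).restrict (mapsTo_mulLeft P _) =
      ∑ b : G, (LinearMap.mulLeft ℂ (single (b⁻¹ * a * b) (1:ℂ))).restrict
        (mapsTo_mulLeft P _) := by
    apply LinearMap.ext
    intro y
    apply Subtype.ext
    show cel a * y.1 = _
    rw [cel, Finset.sum_mul]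
    have : ((∑ b : G, (LinearMap.mulLeft ℂ (single (b⁻¹ * a * b) (1:ℂ))).restrict
        (mapsTo_mulLeft P _)) y).1 = ∑ b : G, single (b⁻¹ * a * b) (1:ℂ) * y.1 := by
      rw [LinearMap.sum_apply]
      rw [Submodule.coe_sum]
      rfl
    rw [this]
  rw [h2, map_sum]
  have h3 : ∀ b : G, LinearMap.trace ℂ ↥(P.restrictScalars ℂ)
      ((LinearMap.mulLeft ℂ (single (b⁻¹ * a * b) (1:ℂ))).restrict (mapsTo_mulLeft P _)) =
      (XP P).character a := by
    intro b
    rw [← XP_character]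
    have : b⁻¹ * a * b = b⁻¹ * a * (b⁻¹)⁻¹ := by rw [inv_inv]
    rw [this, FDRep.char_conj]
  simp only [h3]
  rw [Finset.sum_const, Finset.card_univ, nsmul_eq_mul]

theorem XP_simple (hP : IsSimpleModule (AA G) ↥P) : Simple (XP P) := by
  classical
  apply fdrep_simple_of_invariant
  · obtain ⟨y0, hy0⟩ := exists_ne_zero hP
    refine ⟨⟨y0.1, y0.2⟩, fun h => hy0 (Subtype.ext (congrArg Subtype.val h))⟩
  · intro W hW
    let Q : Submodule (AA G) ↥P :=
      { carrier := {y | (⟨y.1, y.2⟩ : ↥(P.restrictScalars ℂ)) ∈ W}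
        add_mem' := by
          intro y z hy hz
          exact W.add_mem hy hz
        zero_mem' := W.zero_mem
        smul_mem' := by
          intro x y hy
          show (⟨x • y.1, _⟩ : ↥(P.restrictScalars ℂ)) ∈ W
          have hx : x • y.1 = x * y.1 := rfl
          have hmem : ∀ z : AA G, x * z = ∑ g ∈ x.coeff.support, (x.coeff g) • (single g (1:ℂ) * z) := by
            intro z
            conv_lhs => rw [monoidAlgebra_eq_sum x]
            rw [Finset.sum_mul]
            exact Finset.sum_congr rfl fun g _ => smul_mul_assoc _ _ _
          have : (⟨x • y.1, (Submodule.restrictScalars_mem ℂ P _).mpr (P.smul_mem x y.2)⟩ : ↥(P.restrictScalars ℂ)) =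
              ∑ g ∈ x.coeff.support, (x.coeff g) • ((XP P).ρ g ⟨y.1, (Submodule.restrictScalars_mem ℂ P _).mpr y.2⟩) := by
            apply Subtype.ext
            erw [Submodule.coe_sum]
            show x • y.1 = _
            rw [hx, hmem y.1]
            apply Finset.sum_congr rfl
            intro g _
            rfl
          rw [this]
          apply Submodule.sum_mem
          intro g _
          exact W.smul_mem _ (hW g _ hy) }
    haveI := hP
    rcases eq_bot_or_eq_top Q with h | h
    · left
      rw [Submodule.eq_bot_iff]
      intro w hw
      have : (⟨w.1, w.2⟩ : ↥P) ∈ Q := hw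
      rw [h, Submodule.mem_bot] at this
      exact Subtype.ext (congrArg Subtype.val this)
    · right
      rw [eq_top_iff]
      intro w _
      have : (⟨w.1, w.2⟩ : ↥P) ∈ Q := h ▸ Submodule.mem_top
      exact this

theorem trace_comp_of_finrank_one {V : Type} [AddCommGroup V] [Module ℂ V]
    [FiniteDimensional ℂ V] (h : finrank ℂ V = 1) (f g : V →ₗ[ℂ] V) :
    LinearMap.trace ℂ V (f ∘ₗ g) = LinearMap.trace ℂ V f * LinearMap.trace ℂ V g := by
  let B : Basis (Fin 1) ℂ V := finBasisOfFinrankEq ℂ V h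
  rw [LinearMap.trace_eq_matrix_trace ℂ B, LinearMap.trace_eq_matrix_trace ℂ B,
    LinearMap.trace_eq_matrix_trace ℂ B, LinearMap.toMatrix_comp B B B]
  simp [Matrix.trace, Matrix.mul_apply, Fin.sum_univ_one]

theorem char_mul_of_linear (X : FDRep ℂ G) (h1 : X.character 1 = 1) (g h : G) :
    X.character (g * h) = X.character g * X.character h := by
  have hfr : finrank ℂ X = 1 := by
    have := FDRep.char_one X
    rw [h1] at this
    exact_mod_cast this.symm
  show LinearMap.trace ℂ X (X.ρ (g*h)) = _
  rw [map_mul]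
  exact trace_comp_of_finrank_one hfr (X.ρ g) (X.ρ h)

open scoped commutatorElement in
/-- A linear character is 1 on the commutator subgroup. -/
theorem char_commutator_eq_one (X : FDRep ℂ G) (h1 : X.character 1 = 1)
    {h : G} (hh : h ∈ commutator G) : X.character h = 1 := by
  have hmul := char_mul_of_linear X h1
  have hinv : ∀ g : G, X.character g * X.character g⁻¹ = 1 := fun g => by
    rw [← hmul, mul_inv_cancel, h1]
  let φ : G →* ℂˣ :=
    { toFun := fun g => ⟨X.character g, X.character g⁻¹, hinv g, by
        have := hinv g⁻¹; rwa [inv_inv] at this⟩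
      map_one' := by ext; exact h1
      map_mul' := fun g h => by ext; exact hmul g h }
  have hker : commutator G ≤ φ.ker := by
    rw [commutator, Subgroup.commutator_le]
    intro p _ q _
    rw [MonoidHom.mem_ker]
    have : φ ⁅p, q⁆ = φ p * φ q * (φ p)⁻¹ * (φ q)⁻¹ := by
      simp [commutatorElement_def, map_mul, map_inv]
    rw [this, mul_comm (φ p) (φ q)]
    group
  have h2 : φ h = 1 := hker hh
  have h3 := congrArg (fun u : ℂˣ => (u : ℂ)) h2
  exact h3


theorem count_indep [DecidableEq G]
    (hGCP : ∀ χ : G → ℂ, IsIrrChar G χ → χ 1 ≠ 1 →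
      ∀ g : G, g ∉ Subgroup.center G → χ g = 0)
    (a : G) (ha : a ∉ Subgroup.center G) {h : G} (hh : h ∈ commutator G) :
    (Finset.univ.filter fun b : G => b⁻¹ * a * b = a * h).card =
      (Finset.univ.filter fun b : G => b⁻¹ * a * b = a).card := by
  classical
  obtain ⟨s, hindep, hsup, hsimple⟩ :=
    IsSemisimpleModule.exists_sSupIndep_sSup_simples_eq_top (AA G) (AA G)
  have hfin : s.Finite := WellFoundedGT.finite_of_sSupIndep hindep
  haveI : Fintype ↥s := hfin.fintype
  have hiSupIndep : iSupIndep (fun i : s => (i : Submodule (AA G) (AA G))) :=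
    (sSupIndep_iff s).mp hindep
  have hiSup : ⨆ i : s, (i : Submodule (AA G) (AA G)) = ⊤ := by
    rw [← sSup_eq_iSup']; exact hsup
  have hA : DirectSum.IsInternal (fun i : s => (i : Submodule (AA G) (AA G))) :=
    DirectSum.isInternal_submodule_of_iSupIndep_of_iSup_eq_top hiSupIndep hiSup
  have hInternal : DirectSum.IsInternal
      (fun i : s => ((i : Submodule (AA G) (AA G)).restrictScalars ℂ)) := hA
  choose μ hμ using fun i : s => cel_scalar a (hsimple i i.2)
  set χ : ↥s → G → ℂ := fun i g => (XP (i : Submodule (AA G) (AA G))).character g with hχ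
  have key : ∀ g : G, (Fintype.card G : ℂ) *
      ((Finset.univ.filter fun b : G => b⁻¹ * a * b = g⁻¹).card : ℂ) =
      ∑ i : s, μ i * χ i g := by
    intro g
    rw [← trace_mulLeft_cel a g]
    rw [LinearMap.trace_eq_sum_trace_restrict hInternal
      (fun i => mapsTo_mulLeft _ (cel a * single g (1:ℂ)))]
    exact Finset.sum_congr rfl fun i _ => trace_restrict_cel_single a g (μ i) (hμ i)
  have hterm : ∀ i : ↥s, μ i * χ i (h⁻¹ * a⁻¹) = μ i * χ i a⁻¹ := by
    intro i
    by_cases hlin : χ i 1 = 1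
    · rw [hχ]
      simp only
      rw [char_mul_of_linear _ hlin h⁻¹ a⁻¹,
        char_commutator_eq_one _ hlin ((commutator G).inv_mem hh), one_mul]
    · have hirr : IsIrrChar G (χ i) :=
        ⟨XP (i : Submodule (AA G) (AA G)), XP_simple (hsimple i i.2), rfl⟩
      have hzero : χ i a = 0 := hGCP _ hirr hlin a ha
      have hmu : μ i * χ i 1 = (Fintype.card G : ℂ) * χ i a := mu_spec a (μ i) (hμ i)
      rw [hzero, mul_zero] at hmu
      have hχ1 : χ i 1 ≠ 0 := by
        have heq : χ i 1 =
            (finrank ℂ ↥((i : Submodule (AA G) (AA G)).restrictScalars ℂ) : ℂ) := by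
          rw [hχ]
          simp only
          rw [XP_character]
          have hid : (LinearMap.mulLeft ℂ (single (1:G) (1:ℂ))).restrict
              (mapsTo_mulLeft (i : Submodule (AA G) (AA G)) _) =
              LinearMap.id (R := ℂ) (M := ↥((i : Submodule (AA G) (AA G)).restrictScalars ℂ)) := by
            apply LinearMap.ext
            intro y
            apply Subtype.ext
            show single (1:G) (1:ℂ) * y.1 = y.1
            rw [← MonoidAlgebra.one_def, one_mul]
          rw [hid, LinearMap.trace_id]
        rw [heq]
        obtain ⟨y0, hy0⟩ := exists_ne_zero (hsimple i i.2)
        haveI : Nontrivial ↥((i : Submodule (AA G) (AA G)).restrictScalars ℂ) := by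
          refine ⟨⟨y0.1, y0.2⟩, 0, fun hc => hy0 (Subtype.ext (congrArg Subtype.val hc))⟩
        have hpos : 0 < finrank ℂ ↥((i : Submodule (AA G) (AA G)).restrictScalars ℂ) :=
          finrank_pos
        exact Nat.cast_ne_zero.mpr (by omega)
      have hm0 : μ i = 0 := by
        rcases mul_eq_zero.mp hmu with h' | h'
        · exact h'
        · exact absurd h' hχ1
      rw [hm0, zero_mul, zero_mul]
  have hkey1 := key (h⁻¹ * a⁻¹)
  have hkey2 := key a⁻¹
  rw [show (h⁻¹ * a⁻¹)⁻¹ = a * h by rw [mul_inv_rev, inv_inv, inv_inv]] at hkey1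
  rw [inv_inv] at hkey2
  have hsum : (∑ i : s, μ i * χ i (h⁻¹ * a⁻¹)) = ∑ i : s, μ i * χ i a⁻¹ :=
    Finset.sum_congr rfl fun i _ => hterm i
  have hcards : (Fintype.card G : ℂ) *
      ((Finset.univ.filter fun b : G => b⁻¹ * a * b = a * h).card : ℂ) =
      (Fintype.card G : ℂ) *
      ((Finset.univ.filter fun b : G => b⁻¹ * a * b = a).card : ℂ) := by
    rw [hkey1, hkey2, hsum]
  have hcard_ne : (Fintype.card G : ℂ) ≠ 0 := Nat.cast_ne_zero.mpr Fintype.card_ne_zero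
  have := mul_left_cancel₀ hcard_ne hcards
  exact_mod_cast this

theorem wcomm_iff (a b g : G) : (wcomm a b = g) ↔ (b⁻¹ * a * b = a * g) := by
  rw [wcomm]
  constructor
  · rintro rfl
    group
  · intro h
    rw [show a⁻¹ * b⁻¹ * a * b = a⁻¹ * (b⁻¹ * a * b) by group, h]
    group

open scoped commutatorElement in
theorem wcomm_mem (a b : G) : wcomm a b ∈ commutator G := by
  have : wcomm a b = ⁅a⁻¹, b⁻¹⁆ := by rw [wcomm, commutatorElement_def]; group
  rw [this, commutator_def]
  exact Subgroup.commutator_mem_commutator (Subgroup.mem_top _) (Subgroup.mem_top _)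

theorem wcomm_center (a : G) (ha : a ∈ Subgroup.center G) (b : G) : wcomm a b = 1 := by
  rw [wcomm]
  have h := (Subgroup.mem_center_iff.mp ha) b⁻¹
  rw [show a⁻¹ * b⁻¹ * a * b = a⁻¹ * (b⁻¹ * a) * b by group, h]
  group

end GCP

theorem stmt_8 {G : Type} [Group G] [Fintype G]
    (hna : ∃ a b : G, a * b ≠ b * a)
    (hGCP : ∀ χ : G → ℂ, IsIrrChar G χ → χ 1 ≠ 1 →
      ∀ g : G, g ∉ Subgroup.center G → χ g = 0) :
    (∀ g : G, g ∈ commutator G → g ≠ 1 →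
      (Nat.card {p : G × G // wcomm p.1 p.2 = g} : ℂ) =
        (Fintype.card G : ℂ) ^ 2 / (Nat.card ↥(commutator G) : ℂ) *
          (1 - 1 / ((Subgroup.center G).index : ℂ))) ∧
    (Nat.card {p : G × G // wcomm p.1 p.2 = (1 : G)} : ℂ) =
      (Fintype.card G : ℂ) ^ 2 / (Nat.card ↥(commutator G) : ℂ) *
        (1 + ((Nat.card ↥(commutator G) : ℂ) - 1) / ((Subgroup.center G).index : ℂ)) := by
  classical
  set Z := Subgroup.center G with hZdef
  set C := commutator G with hCdef
  set CF : Finset G := Finset.univ.filter (· ∈ C) with hCF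
  set ZF : Finset G := Finset.univ.filter (· ∈ Z) with hZF
  -- counts
  set m : G → G → ℕ := fun a g => (Finset.univ.filter fun b => wcomm a b = g).card with hm
  -- Nat.card as a sum over first coordinates
  have hNform : ∀ g : G, (Nat.card {p : G × G // wcomm p.1 p.2 = g}) = ∑ a : G, m a g := by
    intro g
    rw [Nat.card_eq_fintype_card,
      Fintype.card_congr (Equiv.subtypeProdEquivSigmaSubtype (fun a b => wcomm a b = g)),
      Fintype.card_sigma]
    exact Finset.sum_congr rfl fun a _ => Fintype.card_subtype _
  -- central elements
  have hZcount : ∀ a ∈ Z, ∀ g : G, m a g = if g = 1 then Fintype.card G else 0 := by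
    intro a ha g
    rw [hm]
    simp only
    by_cases hg : g = 1
    · subst hg
      simp only [if_pos rfl]
      rw [← Finset.card_univ]
      congr 1
      rw [Finset.filter_eq_self]
      intro b _
      exact wcomm_center a ha b
    · rw [if_neg hg]
      rw [Finset.card_eq_zero, Finset.filter_eq_empty_iff]
      intro b _
      rw [wcomm_center a ha b]
      exact fun hc => hg hc.symm
  -- fibers partition the group
  have hpart : ∀ a : G, ∑ g ∈ CF, m a g = Fintype.card G := by
    intro a
    rw [← Finset.card_univ]
    refine (Finset.card_eq_sum_card_fiberwise (f := fun b => wcomm a b)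
      (t := CF) fun b _ => ?_).symm
    rw [hCF, Finset.mem_coe, Finset.mem_filter]
    exact ⟨Finset.mem_univ _, wcomm_mem a b⟩
  -- for non-central a the count is independent of g ∈ C
  have hkey : ∀ a, a ∉ Z → ∀ g ∈ C, m a g = m a 1 := by
    intro a ha g hg
    rw [hm]
    simp only
    have e1 : (Finset.univ.filter fun b => wcomm a b = g) =
        (Finset.univ.filter fun b : G => b⁻¹ * a * b = a * g) := by
      apply Finset.filter_congr
      intro b _
      exact wcomm_iff a b g
    have e2 : (Finset.univ.filter fun b => wcomm a b = 1) =
        (Finset.univ.filter fun b : G => b⁻¹ * a * b = a) := by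
      apply Finset.filter_congr
      intro b _
      rw [wcomm_iff a b 1, mul_one]
    rw [e1, e2]
    exact count_indep hGCP a ha hg
  have hconst : ∀ a, a ∉ Z → CF.card * m a 1 = Fintype.card G := by
    intro a ha
    rw [← hpart a]
    rw [Finset.sum_congr rfl fun g hg => hkey a ha g (Finset.mem_filter.mp hg).2]
    rw [Finset.sum_const, smul_eq_mul]
  -- cardinalities
  have hCFcard : CF.card = Nat.card ↥C := by
    rw [Nat.card_eq_fintype_card, Fintype.card_subtype]
  have hZFcard : ZF.card = Nat.card ↥Z := by
    rw [Nat.card_eq_fintype_card, Fintype.card_subtype]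
  have hzi : (Nat.card ↥Z) * Z.index = Fintype.card G := by
    rw [← Nat.card_eq_fintype_card]
    exact Subgroup.card_mul_index Z
  -- complex constants
  set cg : ℂ := (Fintype.card G : ℂ) with hcg
  set cc : ℂ := (Nat.card ↥C : ℂ) with hcc
  set cz : ℂ := (Nat.card ↥Z : ℂ) with hcz
  set ci : ℂ := ((Z.index : ℕ) : ℂ) with hci
  have hcc0 : cc ≠ 0 := Nat.cast_ne_zero.mpr Nat.card_pos.ne'
  have hci0 : ci ≠ 0 := Nat.cast_ne_zero.mpr (Subgroup.index_ne_zero_of_finite)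
  have hcg0 : cg ≠ 0 := Nat.cast_ne_zero.mpr Fintype.card_ne_zero
  have hczci : cz * ci = cg := by
    rw [hcz, hci, hcg, ← Nat.cast_mul, hzi]
  -- the count for non-central a, in ℂ
  have hmC : ∀ a, a ∉ Z → ∀ g ∈ C, (m a g : ℂ) = cg / cc := by
    intro a ha g hg
    rw [hkey a ha g hg]
    rw [eq_div_iff hcc0]
    rw [mul_comm, hcc, ← hCFcard, ← Nat.cast_mul, hconst a ha]
  -- number of non-central elements
  have hsplit : ∀ g : G, (∑ a : G, m a g) =
      (∑ a ∈ ZF, m a g) + ∑ a ∈ Finset.univ.filter (· ∉ Z), m a g := by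
    intro g
    rw [hZF]
    rw [← Finset.sum_filter_add_sum_filter_not Finset.univ (· ∈ Z)]
  have hnonZcard : ((Finset.univ.filter (· ∉ Z)).card : ℂ) = cg - cz := by
    have h1 : ZF.card + (Finset.univ.filter (· ∉ Z)).card = Fintype.card G := by
      rw [hZF, ← Finset.card_univ]
      exact Finset.card_filter_add_card_filter_not _
    have h2 := congrArg (fun n : ℕ => (n : ℂ)) h1
    push_cast at h2
    rw [hZFcard, ← hcz] at h2
    rw [hcg]
    linear_combination h2
  have hmain : ∀ g ∈ C, (Nat.card {p : G × G // wcomm p.1 p.2 = g} : ℂ) =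
      (∑ a ∈ ZF, (m a g : ℂ)) + (cg - cz) * (cg / cc) := by
    intro g hgC
    rw [hNform g, hsplit g]
    push_cast
    congr 1
    rw [Finset.sum_congr rfl fun a ha => hmC a (Finset.mem_filter.mp ha).2 g hgC]
    rw [Finset.sum_const, nsmul_eq_mul, hnonZcard]
  constructor
  · intro g hgC hg1
    rw [hmain g hgC]
    have h0 : (∑ a ∈ ZF, (m a g : ℂ)) = 0 := by
      apply Finset.sum_eq_zero
      intro a ha
      rw [hZcount a (Finset.mem_filter.mp ha).2 g, if_neg hg1]
      exact Nat.cast_zero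
    rw [h0, zero_add]
    field_simp
    ring_nf
    linear_combination (-1 : ℂ) * hczci
  · have h1C : (1 : G) ∈ C := C.one_mem
    rw [hmain 1 h1C]
    have h0 : (∑ a ∈ ZF, (m a (1:G) : ℂ)) = cz * cg := by
      rw [Finset.sum_congr rfl fun a ha => by
        rw [hZcount a (Finset.mem_filter.mp ha).2 1, if_pos rfl]]
      rw [Finset.sum_const, nsmul_eq_mul, hZFcard, ← hcz, ← hcg]
    rw [h0]
    field_simp
    ring_nf
    linear_combination (cc - 1) * hczci
end

section
/- Let G and H be finite groups that are n-isoclinic via the pair (φ, ψ), where φ : G/Zₙ(G) → H/Zₙ(H) and ψ : γ_{n+1}(G) → γ_{n+1}(H) are compatible isomorphisms. Then for every g ∈ γ_{n+1}(G), the number of (n+1)-tuples in G^{n+1} whose left-normed iterated commutator equals g is (|G|/|H|)^{n+1} times the number of (n+1)-tuples in H^{n+1} whose left-normed iterated commutator equals ψ(g). -/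
open scoped BigOperators

open scoped commutatorElement in
lemma wcomm_mem_lcs {G : Type} [Group G] {k : ℕ} {a : G} (ha : a ∈ (⊤ : Subgroup G).lowerCentralSeries k)
    (b : G) : wcomm a b ∈ (⊤ : Subgroup G).lowerCentralSeries (k + 1) := by
  have h : wcomm a b = ⁅a⁻¹, b⁻¹⁆ := by
    simp [wcomm, commutatorElement_def]
  rw [h]
  show ⁅a⁻¹, b⁻¹⁆ ∈ ⁅(⊤ : Subgroup G).lowerCentralSeries k, (⊤ : Subgroup G)⁆
  exact Subgroup.commutator_mem_commutator (inv_mem ha) (Subgroup.mem_top _)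

lemma foldl_wcomm_mem {G : Type} [Group G] :
    ∀ (l : List G) {k : ℕ} {a : G}, a ∈ (⊤ : Subgroup G).lowerCentralSeries k →
      l.foldl wcomm a ∈ (⊤ : Subgroup G).lowerCentralSeries (k + l.length)
  | [], k, a, ha => ha
  | b :: l, k, a, ha => by
    have := foldl_wcomm_mem l (wcomm_mem_lcs ha b)
    rw [List.foldl_cons, List.length_cons, show k + (l.length + 1) = (k + 1) + l.length by omega]
    exact this

lemma wIter_mem_lcs {G : Type} [Group G] (n : ℕ) (x : Fin (n+1) → G) :
    wIter (n+1) x ∈ (⊤ : Subgroup G).lowerCentralSeries n := by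
  have h : x 0 ∈ (⊤ : Subgroup G).lowerCentralSeries 0 := by simp
  have := foldl_wcomm_mem (List.ofFn fun i : Fin n => x i.succ) h
  simpa [wIter] using this

/-- Counting fibers of a coset-invariant word map over a normal subgroup. -/
lemma card_fiber_eq {G : Type} [Group G] [Fintype G] (N : Subgroup G) [N.Normal] {m : ℕ}
    (w : (Fin m → G) → G)
    (hw : ∀ x x' : Fin m → G,
      (∀ i, (QuotientGroup.mk (x i) : G ⧸ N) = QuotientGroup.mk (x' i)) → w x = w x')
    (g : G) :
    Nat.card {x : Fin m → G // w x = g} =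
      Nat.card {c : Fin m → G ⧸ N // w (fun i => (c i).out) = g} * Nat.card N ^ m := by
  have key : ∀ x : Fin m → G, w (fun i => ((QuotientGroup.mk (x i) : G ⧸ N)).out) = w x := by
    intro x
    refine hw _ _ fun i => ?_
    exact QuotientGroup.out_eq' _
  let e : {x : Fin m → G // w x = g} ≃
      {c : Fin m → G ⧸ N // w (fun i => (c i).out) = g} × (Fin m → N) :=
    { toFun := fun x =>
        ⟨⟨fun i => QuotientGroup.mk (x.1 i), by rw [key]; exact x.2⟩,
         fun i => ⟨((QuotientGroup.mk (x.1 i) : G ⧸ N)).out⁻¹ * x.1 i,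
           QuotientGroup.eq.mp (QuotientGroup.out_eq' _)⟩⟩
      invFun := fun p => ⟨fun i => (p.1.1 i).out * (p.2 i : G), by
        have h : ∀ i, (QuotientGroup.mk ((p.1.1 i).out * (p.2 i : G)) : G ⧸ N)
            = QuotientGroup.mk ((p.1.1 i).out) := by
          intro i
          rw [QuotientGroup.eq]
          simpa [mul_inv_rev, mul_assoc] using inv_mem (p.2 i).2
        calc w (fun i => (p.1.1 i).out * (p.2 i : G))
            = w (fun i => (p.1.1 i).out) := hw _ _ h
          _ = g := p.1.2⟩
      left_inv := fun x => by
        ext i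
        simp
      right_inv := fun p => by
        have hmk : ∀ i, (QuotientGroup.mk ((p.1.1 i).out * (p.2 i : G)) : G ⧸ N) = p.1.1 i := by
          intro i
          have hstep : (QuotientGroup.mk ((p.1.1 i).out * (p.2 i : G)) : G ⧸ N)
              = QuotientGroup.mk ((p.1.1 i).out) := by
            rw [QuotientGroup.eq]
            simpa [mul_inv_rev, mul_assoc] using inv_mem (p.2 i).2
          rw [hstep]
          exact QuotientGroup.out_eq' _
        refine Prod.ext (Subtype.ext (funext fun i => hmk i)) (funext fun i => Subtype.ext ?_)
        simp only [hmk i]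
        group }
  rw [Nat.card_congr e, Nat.card_prod, Nat.card_fun]
  simp

theorem stmt_13 {G H : Type} [Group G] [Fintype G] [Group H] [Fintype H] (n : ℕ)
    (φ : (G ⧸ Subgroup.upperCentralSeries G n) ≃* (H ⧸ Subgroup.upperCentralSeries H n))
    (ψ : ((⊤ : Subgroup G).lowerCentralSeries n) ≃* ((⊤ : Subgroup H).lowerCentralSeries n))
    (hcompat : ∀ (x : Fin (n+1) → G) (y : Fin (n+1) → H),
      (∀ i, φ (QuotientGroup.mk (x i)) = QuotientGroup.mk (y i)) →
      ∀ hx : wIter (n+1) x ∈ (⊤ : Subgroup G).lowerCentralSeries n,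
        (ψ ⟨wIter (n+1) x, hx⟩ : H) = wIter (n+1) y)
    (g : G) (hg : g ∈ (⊤ : Subgroup G).lowerCentralSeries n) :
    (Nat.card {x : Fin (n+1) → G // wIter (n+1) x = g} : ℚ) =
      ((Fintype.card G : ℚ) / (Fintype.card H : ℚ)) ^ (n+1) *
        (Nat.card {y : Fin (n+1) → H // wIter (n+1) y = (ψ ⟨g, hg⟩ : H)} : ℚ) := by
  classical
  -- coset-invariance in G
  have keyG : ∀ x x' : Fin (n+1) → G,
      (∀ i, (QuotientGroup.mk (x i) : G ⧸ Subgroup.upperCentralSeries G n) = QuotientGroup.mk (x' i)) →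
      wIter (n+1) x = wIter (n+1) x' := by
    intro x x' hxx
    set y : Fin (n+1) → H := fun i => (φ (QuotientGroup.mk (x i))).out with hy
    have hy1 : ∀ i, φ (QuotientGroup.mk (x i)) = QuotientGroup.mk (y i) := by
      intro i; exact (QuotientGroup.out_eq' _).symm
    have hy2 : ∀ i, φ (QuotientGroup.mk (x' i)) = QuotientGroup.mk (y i) := by
      intro i; rw [← hxx i]; exact hy1 i
    have h1 := hcompat x y hy1 (wIter_mem_lcs n x)
    have h2 := hcompat x' y hy2 (wIter_mem_lcs n x')
    have := ψ.injective (Subtype.ext (h1.trans h2.symm))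
    exact congrArg Subtype.val this
  -- coset-invariance in H
  have keyH : ∀ y y' : Fin (n+1) → H,
      (∀ i, (QuotientGroup.mk (y i) : H ⧸ Subgroup.upperCentralSeries H n) = QuotientGroup.mk (y' i)) →
      wIter (n+1) y = wIter (n+1) y' := by
    intro y y' hyy
    set x : Fin (n+1) → G := fun i => (φ.symm (QuotientGroup.mk (y i))).out with hx
    have hx1 : ∀ i, φ (QuotientGroup.mk (x i)) = QuotientGroup.mk (y i) := by
      intro i
      rw [show (QuotientGroup.mk (x i) : G ⧸ Subgroup.upperCentralSeries G n)
          = φ.symm (QuotientGroup.mk (y i)) from QuotientGroup.out_eq' _]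
      simp
    have hx2 : ∀ i, φ (QuotientGroup.mk (x i)) = QuotientGroup.mk (y' i) := by
      intro i; rw [hx1 i]; exact hyy i
    have h1 := hcompat x y hx1 (wIter_mem_lcs n x)
    have h2 := hcompat x y' hx2 (wIter_mem_lcs n x)
    exact h1.symm.trans h2
  -- counting via cosets
  have cG := card_fiber_eq (Subgroup.upperCentralSeries G n) (wIter (n+1)) keyG g
  have cH := card_fiber_eq (Subgroup.upperCentralSeries H n) (wIter (n+1)) keyH (ψ ⟨g, hg⟩ : H)
  -- the transfer equivalence between coset fibers
  have transfer : ∀ c : Fin (n+1) → G ⧸ Subgroup.upperCentralSeries G n,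
      (ψ ⟨wIter (n+1) (fun i => (c i).out), wIter_mem_lcs n _⟩ : H)
        = wIter (n+1) (fun i => (φ (c i)).out) := by
    intro c
    refine hcompat _ _ (fun i => ?_) _
    rw [QuotientGroup.out_eq', QuotientGroup.out_eq']
  let e : {c : Fin (n+1) → G ⧸ Subgroup.upperCentralSeries G n //
        wIter (n+1) (fun i => (c i).out) = g} ≃
      {d : Fin (n+1) → H ⧸ Subgroup.upperCentralSeries H n //
        wIter (n+1) (fun i => (d i).out) = (ψ ⟨g, hg⟩ : H)} :=
    { toFun := fun c => ⟨fun i => φ (c.1 i), by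
        rw [← transfer c.1]
        exact congrArg (fun t => ((ψ t : (⊤ : Subgroup H).lowerCentralSeries n) : H)) (Subtype.ext c.2)⟩
      invFun := fun d => ⟨fun i => φ.symm (d.1 i), by
        have h := transfer (fun i => φ.symm (d.1 i))
        simp only [MulEquiv.apply_symm_apply] at h
        rw [d.2] at h
        exact congrArg Subtype.val (ψ.injective (Subtype.ext h))⟩
      left_inv := fun c => Subtype.ext (funext fun i => by simp)
      right_inv := fun d => Subtype.ext (funext fun i => by simp) }
  have hNN : Nat.card {c : Fin (n+1) → G ⧸ Subgroup.upperCentralSeries G n //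
        wIter (n+1) (fun i => (c i).out) = g}
      = Nat.card {d : Fin (n+1) → H ⧸ Subgroup.upperCentralSeries H n //
        wIter (n+1) (fun i => (d i).out) = (ψ ⟨g, hg⟩ : H)} := Nat.card_congr e
  -- cardinal bookkeeping
  have hGcard : Nat.card G = Nat.card (G ⧸ Subgroup.upperCentralSeries G n)
      * Nat.card (Subgroup.upperCentralSeries G n) :=
    Subgroup.card_eq_card_quotient_mul_card_subgroup _
  have hHcard : Nat.card H = Nat.card (H ⧸ Subgroup.upperCentralSeries H n)
      * Nat.card (Subgroup.upperCentralSeries H n) :=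
    Subgroup.card_eq_card_quotient_mul_card_subgroup _
  have hQ : Nat.card (G ⧸ Subgroup.upperCentralSeries G n)
      = Nat.card (H ⧸ Subgroup.upperCentralSeries H n) := Nat.card_congr φ.toEquiv
  set N : ℕ := Nat.card {c : Fin (n+1) → G ⧸ Subgroup.upperCentralSeries G n //
        wIter (n+1) (fun i => (c i).out) = g} with hN
  set a : ℕ := Nat.card (Subgroup.upperCentralSeries G n) with ha
  set b : ℕ := Nat.card (Subgroup.upperCentralSeries H n) with hb
  set q : ℕ := Nat.card (H ⧸ Subgroup.upperCentralSeries H n) with hq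
  have ha0 : 0 < a := Nat.card_pos
  have hb0 : 0 < b := Nat.card_pos
  have hq0 : 0 < q := Nat.card_pos
  rw [cG, cH, ← hNN]
  rw [show Fintype.card G = q * a by rw [← Nat.card_eq_fintype_card, hGcard, hQ],
      show Fintype.card H = q * b by rw [← Nat.card_eq_fintype_card, hHcard]]
  push_cast
  have hb0' : (b : ℚ) ≠ 0 := by positivity
  have hq0' : (q : ℚ) ≠ 0 := by positivity
  field_simp
  rw [div_pow, mul_assoc, div_mul_cancel₀ _ (pow_ne_zero _ hb0')]
end

section
/- Let G be a finite group with cd(G) = {1, m}, and suppose G has an abelian normal subgroup N of index m such that every nonlinear irreducible character of G is induced from an irreducible (linear) character of N. Then for every n ≥ 3 and every nonlinear irreducible character χ of G, the inner product ⟨ζ^{w_{n−1}}_G · χ, χ⟩ ≤ m·|G|^{n−1}/|N|, where ζ^{w_{n−1}}_G(g) is the number of solutions of the iterated commutator equation [...[[x₁,x₂],x₃],...,x_{n−1}] = g. -/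
open scoped BigOperators

-- The character of `G` induced by a character `ψ` of a subgroup `N`.
open Classical in
noncomputable def indChar {G : Type} [Group G] [Fintype G] (N : Subgroup G)
    (ψ : N → ℂ) (g : G) : ℂ :=
  (Nat.card ↥N : ℂ)⁻¹ *
    ∑ x : G, if h : x * g * x⁻¹ ∈ N then ψ ⟨x * g * x⁻¹, h⟩ else 0

/- Auxiliary lemmas -/

lemma trace_mul_of_finrank_one {V : Type*} [AddCommGroup V] [Module ℂ V] [Module.Finite ℂ V]
    (h1 : Module.finrank ℂ V = 1) (f g : V →ₗ[ℂ] V) :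
    LinearMap.trace ℂ V (f * g) = LinearMap.trace ℂ V f * LinearMap.trace ℂ V g := by
  let b := Module.finBasisOfFinrankEq ℂ V h1
  rw [LinearMap.trace_eq_matrix_trace ℂ b, LinearMap.trace_eq_matrix_trace ℂ b,
    LinearMap.trace_eq_matrix_trace ℂ b, Matrix.trace_fin_one, Matrix.trace_fin_one,
    Matrix.trace_fin_one, LinearMap.toMatrix_mul, Matrix.mul_apply, Fin.sum_univ_one]

lemma trace_pow_of_finrank_one {V : Type*} [AddCommGroup V] [Module ℂ V] [Module.Finite ℂ V]
    (h1 : Module.finrank ℂ V = 1) (f : V →ₗ[ℂ] V) (k : ℕ) :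
    LinearMap.trace ℂ V (f ^ k) = (LinearMap.trace ℂ V f) ^ k := by
  induction k with
  | zero => simp [LinearMap.trace_one, h1]
  | succ k ih => rw [pow_succ, pow_succ, trace_mul_of_finrank_one h1, ih]

lemma abs_char_le_one {H : Type} [Group H] [Finite H] (V : FDRep ℂ H)
    (h1 : V.character 1 = 1) (h : H) : ‖V.character h‖ ≤ 1 := by
  have hfr : Module.finrank ℂ V = 1 := by
    have h2 := V.char_one
    rw [h1] at h2
    exact_mod_cast h2.symm
  have hk : orderOf h ≠ 0 := (orderOf_pos h).ne'
  have hpow : V.character h ^ orderOf h = 1 := by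
    show LinearMap.trace ℂ V (V.ρ h) ^ orderOf h = 1
    rw [← trace_pow_of_finrank_one hfr, ← map_pow, pow_orderOf_eq_one, map_one,
      LinearMap.trace_one, hfr, Nat.cast_one]
  have habs : ‖V.character h‖ ^ orderOf h = 1 := by
    rw [← norm_pow, hpow, norm_one]
  by_contra hc
  push_neg at hc
  have := one_lt_pow₀ hc hk
  rw [habs] at this
  exact lt_irrefl 1 this

open Classical in
lemma indChar_one {G : Type} [Group G] [Fintype G] (N : Subgroup G) (ψ : ↥N → ℂ) :
    indChar N ψ 1 = (Nat.card ↥N : ℂ)⁻¹ * (Fintype.card G * ψ 1) := by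
  unfold indChar
  congr 1
  trans (∑ _x : G, ψ 1)
  · refine Finset.sum_congr rfl fun x _ => ?_
    rw [dif_pos (show x * 1 * x⁻¹ ∈ N by rw [mul_one, mul_inv_cancel]; exact one_mem N)]
    congr 1
    ext
    simp
  · rw [Finset.sum_const, Finset.card_univ, nsmul_eq_mul]

open Classical in
lemma abs_indChar_le {G : Type} [Group G] [Fintype G] (N : Subgroup G) (ψ : ↥N → ℂ) (m : ℕ)
    (hb : ∀ h : ↥N, ‖ψ h‖ ≤ 1)
    (hm : (m : ℝ) * (Nat.card ↥N : ℝ) = Fintype.card G) (g : G) :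
    ‖indChar N ψ g‖ ≤ m := by
  unfold indChar
  rw [norm_mul]
  have h1 : ‖((Nat.card ↥N : ℂ)⁻¹)‖ = (Nat.card ↥N : ℝ)⁻¹ := by
    rw [norm_inv, Complex.norm_natCast]
  rw [h1]
  have h2 : ‖∑ x : G, if h : x * g * x⁻¹ ∈ N then ψ ⟨x * g * x⁻¹, h⟩ else 0‖
      ≤ (Fintype.card G : ℝ) := by
    calc ‖∑ x : G, if h : x * g * x⁻¹ ∈ N then ψ ⟨x * g * x⁻¹, h⟩ else 0‖
        ≤ ∑ x : G, ‖if h : x * g * x⁻¹ ∈ N then ψ ⟨x * g * x⁻¹, h⟩ else 0‖ := by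
          exact norm_sum_le _ _
      _ ≤ ∑ _x : G, (1:ℝ) := by
          refine Finset.sum_le_sum fun x _ => ?_
          by_cases hx : x * g * x⁻¹ ∈ N
          · rw [dif_pos hx]; exact hb _
          · rw [dif_neg hx]; simp
      _ = (Fintype.card G : ℝ) := by simp
  calc (Nat.card ↥N : ℝ)⁻¹ * ‖_‖ ≤ (Nat.card ↥N : ℝ)⁻¹ * (Fintype.card G : ℝ) := by
        exact mul_le_mul_of_nonneg_left h2 (by positivity)
    _ = m := by
        rw [← hm]
        have hN0 : (0:ℝ) < (Nat.card ↥N : ℝ) := by exact_mod_cast Nat.card_pos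
        field_simp

theorem stmt_15 {G : Type} [Group G] [Fintype G] (m : ℕ) (N : Subgroup G) [N.Normal]
    (habelian : ∀ a b : N, a * b = b * a)
    (hidx : N.index = m)
    (hcd : ∀ χ : G → ℂ, IsIrrChar G χ → χ 1 = 1 ∨ χ 1 = (m : ℂ))
    (hind : ∀ χ : G → ℂ, IsIrrChar G χ → χ 1 ≠ 1 →
      ∃ ψ : N → ℂ, IsIrrChar N ψ ∧ ∀ g : G, χ g = indChar N ψ g)
    (n : ℕ) (hn : 3 ≤ n) (χ : G → ℂ) (hχ : IsIrrChar G χ) (hχnl : χ 1 ≠ 1) :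
    (Fintype.card G : ℝ)⁻¹ *
        ∑ g : G, (Nat.card {x : Fin (n-1) → G // wIter (n-1) x = g} : ℝ) *
          Complex.normSq (χ g) ≤
      (m : ℝ) * (Fintype.card G : ℝ) ^ (n - 1) / (Nat.card ↥N : ℝ) := by
  classical
  obtain ⟨ψ, hψirr, hχψ⟩ := hind χ hχ hχnl
  have hχ1 : χ 1 = (m : ℂ) := (hcd χ hχ).resolve_left hχnl
  have hNpos : 0 < Nat.card ↥N := Nat.card_pos
  have hNG : m * Nat.card ↥N = Fintype.card G := by
    have h := Subgroup.card_mul_index N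
    rw [hidx] at h
    rw [← Nat.card_eq_fintype_card, ← h, mul_comm]
  have hGpos : 0 < Fintype.card G := Fintype.card_pos
  have hm0 : m ≠ 0 := by
    intro h
    rw [h, zero_mul] at hNG
    omega
  -- ψ 1 = 1
  have hNC : (Nat.card ↥N : ℂ) ≠ 0 := by exact_mod_cast hNpos.ne'
  have hmC : (m : ℂ) ≠ 0 := by exact_mod_cast hm0
  have hGC : (Fintype.card G : ℂ) = (m : ℂ) * (Nat.card ↥N : ℂ) := by exact_mod_cast hNG.symm
  have hψ1 : ψ 1 = 1 := by
    have h := hχψ 1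
    rw [hχ1, indChar_one, hGC] at h
    field_simp at h
    exact h.symm
  -- |ψ| ≤ 1
  have hb : ∀ h : ↥N, ‖ψ h‖ ≤ 1 := by
    obtain ⟨W, _, hW⟩ := hψirr
    intro h
    rw [hW]
    exact abs_char_le_one W (by rw [← hW]; exact hψ1) h
  -- |χ| ≤ m
  have hmr : (m : ℝ) * (Nat.card ↥N : ℝ) = Fintype.card G := by exact_mod_cast hNG
  have habs : ∀ g : G, ‖χ g‖ ≤ m := fun g => by
    rw [hχψ g]; exact abs_indChar_le N ψ m hb hmr g
  have hnsq : ∀ g : G, Complex.normSq (χ g) ≤ (m : ℝ) ^ 2 := fun g => by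
    rw [← Complex.sq_norm]
    exact pow_le_pow_left₀ (norm_nonneg _) (habs g) 2
  -- total count
  have hsumζ : ∑ g : G, Nat.card {x : Fin (n-1) → G // wIter (n-1) x = g}
      = Fintype.card G ^ (n-1) := by
    simp_rw [Nat.card_eq_fintype_card, Fintype.card_subtype]
    calc ∑ g : G, (Finset.univ.filter fun x : Fin (n-1) → G => wIter (n-1) x = g).card
        = (Finset.univ : Finset (Fin (n-1) → G)).card :=
          (Finset.card_eq_sum_card_fiberwise fun x _ => Finset.mem_univ (wIter (n-1) x)).symm
      _ = Fintype.card G ^ (n-1) := by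
          rw [Finset.card_univ, Fintype.card_fun, Fintype.card_fin]
  have hsumζR : ∑ g : G, (Nat.card {x : Fin (n-1) → G // wIter (n-1) x = g} : ℝ)
      = (Fintype.card G : ℝ) ^ (n-1) := by
    rw [← Nat.cast_sum, hsumζ]
    push_cast
    ring
  calc (Fintype.card G : ℝ)⁻¹ *
        ∑ g : G, (Nat.card {x : Fin (n-1) → G // wIter (n-1) x = g} : ℝ) *
          Complex.normSq (χ g)
      ≤ (Fintype.card G : ℝ)⁻¹ *
        ∑ g : G, (Nat.card {x : Fin (n-1) → G // wIter (n-1) x = g} : ℝ) * (m:ℝ)^2 := by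
        refine mul_le_mul_of_nonneg_left (Finset.sum_le_sum fun g _ => ?_) (by positivity)
        exact mul_le_mul_of_nonneg_left (hnsq g) (by positivity)
    _ = (Fintype.card G : ℝ)⁻¹ * ((Fintype.card G : ℝ) ^ (n-1) * (m:ℝ)^2) := by
        rw [← Finset.sum_mul, hsumζR]
    _ = (m : ℝ) * (Fintype.card G : ℝ) ^ (n - 1) / (Nat.card ↥N : ℝ) := by
        have hN0 : (0:ℝ) < (Nat.card ↥N : ℝ) := by exact_mod_cast hNpos
        have hG0 : (0:ℝ) < (Fintype.card G : ℝ) := by exact_mod_cast hGpos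
        have hmr' : (m:ℝ) * (Fintype.card ↥N : ℝ) = Fintype.card G := by
          rw [← Nat.card_eq_fintype_card]; exact hmr
        field_simp
        linear_combination hmr
end

section
/- Let G be a finite group such that (G, Z(G)) is a Camina pair, i.e., gZ(G) ⊆ Cl_G(g) for every g ∈ G \ Z(G). Then every χ ∈ Irr(G|Z(G)) (irreducible characters not containing Z(G) in their kernel) vanishes on G \ Z(G) and has degree |G:Z(G)|^{1/2}, and the number of such characters is |Z(G)| − 1. -/
set_option maxHeartbeats 1000000

open scoped BigOperators

namespace Stmt17Aux

open CategoryTheory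
noncomputable section
set_option linter.unusedSectionVars false
set_option linter.unusedVariables false
variable {G : Type} [Group G] [Fintype G]


def mkHom {V W : FDRep ℂ G} (f : V →ₗ[ℂ] W)
    (hf : ∀ (g : G) (v : V), f (V.ρ g v) = W.ρ g (f v)) : V ⟶ W where
  hom := FGModuleCat.ofHom f
  comm g := by ext v; exact hf g v

lemma mkHom_hom {V W : FDRep ℂ G} (f : V →ₗ[ℂ] W) (hf) (v : V) :
    (mkHom f hf).hom v = f v := rfl

lemma hom_comm {V W : FDRep ℂ G} (f : V ⟶ W) (g : G) (v : V) :
    f.hom (V.ρ g v) = W.ρ g (f.hom v) :=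
  congrArg (fun (φ : V.V ⟶ W.V) => φ v) (f.comm g)

lemma central_scalar (V : FDRep ℂ G) [Simple V] {z : G} (hz : z ∈ Subgroup.center G) :
    ∃ c : ℂ, V.ρ z = c • (LinearMap.id : V →ₗ[ℂ] V) := by
  have hcomm : ∀ (g : G) (v : V), (V.ρ z) (V.ρ g v) = V.ρ g ((V.ρ z) v) := by
    intro g v
    rw [← Module.End.mul_apply, ← Module.End.mul_apply, ← map_mul, ← map_mul,
      (Subgroup.mem_center_iff.mp hz g)]
  obtain ⟨c, hc⟩ := CategoryTheory.endomorphism_simple_eq_smul_id (𝕜 := ℂ) (mkHom (V.ρ z) hcomm)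
  refine ⟨c, ?_⟩
  ext v
  have h0 := congrArg (fun (φ : V.V ⟶ V.V) => φ v) (congrArg Action.Hom.hom hc)
  simp only [Action.smul_hom] at h0
  exact h0.symm

lemma char_smul (V : FDRep ℂ G) {z : G} {c : ℂ}
    (hc : V.ρ z = c • (LinearMap.id : V →ₗ[ℂ] V)) (g : G) :
    V.character (z * g) = c * V.character g := by
  unfold FDRep.character
  rw [map_mul, hc]
  have : (c • (LinearMap.id : V →ₗ[ℂ] V)) * V.ρ g = c • V.ρ g := by
    ext v; simp
  rw [this, map_smul, smul_eq_mul]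

lemma sum_char (V : FDRep ℂ G) [Simple V] :
    ∑ g : G, V.character g * V.character g⁻¹ = (Fintype.card G : ℂ) := by
  have h := FDRep.char_orthonormal (k := ℂ) V V
  rw [if_pos ⟨Iso.refl V⟩] at h
  have hcard : (Nat.card G : ℂ) ≠ 0 := by
    exact_mod_cast Nat.card_pos.ne'
  rw [inv_mul_eq_one₀ hcard, Nat.card_eq_fintype_card] at h
  exact h.symm

open scoped Classical in
lemma part1 (hCP : ∀ g : G, g ∉ Subgroup.center G →
      ∀ z ∈ Subgroup.center G, IsConj g (g * z))
    (V : FDRep ℂ G) [Simple V]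
    (hz : ∃ z ∈ Subgroup.center G, V.character z ≠ V.character 1) :
    (∀ g : G, g ∉ Subgroup.center G → V.character g = 0) ∧
      V.character 1 ^ 2 = ((Subgroup.center G).index : ℂ) := by
  obtain ⟨z₀, hz₀mem, hz₀ne⟩ := hz
  obtain ⟨c₀, hc₀⟩ := central_scalar V hz₀mem
  have hχz₀ : V.character z₀ = c₀ * V.character 1 := by
    simpa using char_smul V hc₀ 1
  have hc₀ne : c₀ ≠ 1 := by
    rintro rfl; exact hz₀ne (by simpa using hχz₀)
  have hvanish : ∀ g : G, g ∉ Subgroup.center G → V.character g = 0 := by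
    intro g hg
    have h1 : V.character (z₀ * g) = c₀ * V.character g := char_smul V hc₀ g
    have h2 : V.character (z₀ * g) = V.character g := by
      obtain ⟨u, hu⟩ := isConj_iff.mp (hCP g hg z₀ hz₀mem)
      have : z₀ * g = u * g * u⁻¹ := by
        rw [hu, (Subgroup.mem_center_iff.mp hz₀mem g)]
      rw [this, FDRep.char_conj]
    have := h1.symm.trans h2
    have h3 : (c₀ - 1) * V.character g = 0 := by linear_combination this
    rcases mul_eq_zero.mp h3 with h | h
    · exact absurd (sub_eq_zero.mp h) hc₀ne
    · exact h
  refine ⟨hvanish, ?_⟩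
  -- each central term contributes χ(1)^2
  have hcent : ∀ z ∈ Subgroup.center G,
      V.character z * V.character z⁻¹ = V.character 1 * V.character 1 := by
    intro z hzz
    obtain ⟨c, hc⟩ := central_scalar V hzz
    have e1 : V.character z = c * V.character 1 := by simpa using char_smul V hc 1
    have e2 : c * V.character z⁻¹ = V.character 1 := by
      rw [← char_smul V hc z⁻¹, mul_inv_cancel]
    calc V.character z * V.character z⁻¹ = V.character 1 * (c * V.character z⁻¹) := by
          rw [e1]; ring
      _ = V.character 1 * V.character 1 := by rw [e2]
  have hsum := sum_char V
  rw [← Finset.sum_filter_of_ne (p := (· ∈ Subgroup.center G))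
    (fun x _ hx => by_contra fun hmem => hx (by rw [hvanish x hmem, zero_mul]))] at hsum
  rw [Finset.sum_congr rfl (fun z hzf => hcent z (Finset.mem_filter.mp hzf).2)] at hsum
  rw [Finset.sum_const] at hsum
  have hcardZ : (Finset.univ.filter (· ∈ Subgroup.center G)).card
      = Nat.card ↥(Subgroup.center G) := by
    rw [Nat.card_eq_fintype_card]
    exact (Fintype.card_subtype (fun x => x ∈ Subgroup.center G)).symm
  rw [hcardZ] at hsum
  have hlag : (Nat.card ↥(Subgroup.center G)) * (Subgroup.center G).index = Fintype.card G := by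
    rw [← Nat.card_eq_fintype_card]
    exact Subgroup.card_mul_index _
  have hZne : ((Nat.card ↥(Subgroup.center G) : ℂ)) ≠ 0 := by
    exact_mod_cast Nat.card_ne_zero.mpr ⟨One.instNonempty, inferInstance⟩
  have key : ((Nat.card ↥(Subgroup.center G) : ℂ)) * (V.character 1 ^ 2)
      = ((Nat.card ↥(Subgroup.center G) : ℂ)) * ((Subgroup.center G).index : ℂ) := by
    rw [← hlag] at hsum
    rw [nsmul_eq_mul] at hsum
    push_cast at hsum ⊢
    rw [← hsum]; ring
  exact mul_left_cancel₀ hZne key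

/-- The subrepresentation on an invariant submodule. -/
def subRep (U : FDRep ℂ G) (p : Submodule ℂ U)
    (hp : ∀ g : G, ∀ v ∈ p, U.ρ g v ∈ p) : FDRep ℂ G :=
  FDRep.of (V := ↥p)
    { toFun := fun g => (U.ρ g).restrict (fun v hv => hp g v hv)
      map_one' := by
        ext v
        simp [LinearMap.restrict_apply]
      map_mul' := by
        intro g h
        ext v
        simp [LinearMap.restrict_apply] }

lemma subRep_ρ_coe (U : FDRep ℂ G) (p : Submodule ℂ U)
    (hp : ∀ g : G, ∀ v ∈ p, U.ρ g v ∈ p) (g : G) (v : ↥p) :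
    (p.subtype ((subRep U p hp).ρ g v) : U) = U.ρ g (p.subtype v) := rfl

/-- Inclusion of a subrepresentation. -/
def subInc (U : FDRep ℂ G) (p : Submodule ℂ U)
    (hp : ∀ g : G, ∀ v ∈ p, U.ρ g v ∈ p) : subRep U p hp ⟶ U :=
  mkHom (V := subRep U p hp) (p.subtype) (fun g v => rfl)

lemma exists_simple_sub (U : FDRep ℂ G) (v₀ : U) (hv₀ : v₀ ≠ (0 : U)) :
    ∃ (V : FDRep ℂ G), Simple V ∧ ∃ f : V ⟶ U, ∃ v : V, f.hom v ≠ 0 := by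
  haveI : Nontrivial U := ⟨v₀, 0, hv₀⟩
  set S : Set (Submodule ℂ U) :=
    {p | p ≠ ⊥ ∧ ∀ g : G, ∀ v ∈ p, U.ρ g v ∈ p} with hS
  have hStop : (⊤ : Submodule ℂ U) ∈ S :=
    ⟨fun htop => hv₀ ((Submodule.eq_bot_iff ⊤).mp htop v₀ Submodule.mem_top), fun g v _ => trivial⟩
  set T : Set ℕ := (fun p : Submodule ℂ U => Module.finrank ℂ ↥p) '' S with hT
  have hTne : T.Nonempty := ⟨_, ⟨⊤, hStop, rfl⟩⟩
  obtain ⟨p, hpS, hpn⟩ := Nat.sInf_mem hTne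
  have hpn' : Module.finrank ℂ ↥p = sInf T := hpn
  have hmin : ∀ q ∈ S, Module.finrank ℂ ↥p ≤ Module.finrank ℂ ↥q := by
    intro q hq
    rw [hpn']
    exact Nat.sInf_le ⟨q, hq, rfl⟩
  obtain ⟨hpbot, hpinv⟩ := hpS
  set V : FDRep ℂ G := subRep U p hpinv with hV
  set f : V ⟶ U := subInc U p hpinv with hf
  obtain ⟨x, hxp, hx0⟩ := Submodule.ne_bot_iff p |>.mp hpbot
  refine ⟨V, ?_, f, ⟨x, hxp⟩, hx0⟩
  constructor
  intro Y h hMono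
  constructor
  · -- IsIso h → h ≠ 0
    intro hIso h0
    have hid : 𝟙 V = CategoryTheory.inv h ≫ h := (IsIso.inv_hom_id h).symm
    rw [congrArg (fun t => CategoryTheory.inv h ≫ t) h0, Limits.comp_zero] at hid
    have h1 := congrArg (fun φ : V ⟶ V => φ.hom (⟨x, hxp⟩ : ↥p)) hid
    have h2 : (⟨x, hxp⟩ : ↥p) = 0 := h1
    exact hx0 (by simpa using congrArg Subtype.val h2)
  · -- h ≠ 0 → IsIso h
    intro hne
    have hhomne : h.hom ≠ 0 := fun hh => hne (Action.Hom.ext hh)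
    have hyex : ∃ y : ↥(Y.V), h.hom y ≠ 0 := by
      by_contra hall
      push_neg at hall
      exact hhomne (by ext y; exact hall y)
    obtain ⟨y, hy⟩ := hyex
    -- the image of h inside U
    set q : Submodule ℂ U := LinearMap.range (p.subtype ∘ₗ (h.hom.hom.hom : Y →ₗ[ℂ] ↥p)) with hq
    have hq_le : q ≤ p := by
      rintro u ⟨y', rfl⟩
      exact (h.hom y').2
    have hqS : q ∈ S := by
      refine ⟨?_, ?_⟩
      · intro hqbot
        have : (p.subtype ∘ₗ (h.hom.hom.hom : Y →ₗ[ℂ] ↥p)) y ∈ q := ⟨y, rfl⟩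
        rw [hqbot, Submodule.mem_bot] at this
        exact hy (Subtype.ext this)
      · rintro g u ⟨y', rfl⟩
        refine ⟨Y.ρ g y', ?_⟩
        have hc := hom_comm h g y'
        calc (p.subtype ∘ₗ (h.hom.hom.hom : Y →ₗ[ℂ] ↥p)) (Y.ρ g y')
            = p.subtype (h.hom (Y.ρ g y')) := rfl
          _ = p.subtype (V.ρ g (h.hom y')) := by rw [hc]
          _ = U.ρ g (p.subtype (h.hom y')) := subRep_ρ_coe U p hpinv g _
          _ = U.ρ g ((p.subtype ∘ₗ (h.hom.hom.hom : Y →ₗ[ℂ] ↥p)) y') := rfl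
    have hqp : q = p :=
      Submodule.eq_of_le_of_finrank_le hq_le (hmin q hqS)
    -- surjectivity of h.hom
    have hsurj : Function.Surjective (h.hom.hom.hom : Y →ₗ[ℂ] ↥p) := by
      intro w
      have hw : w.1 ∈ q := by rw [hqp]; exact w.2
      obtain ⟨y', hy'⟩ := hw
      exact ⟨y', Subtype.ext hy'⟩
    -- injectivity of h.hom
    have hKinv : ∀ g : G, ∀ v ∈ LinearMap.ker (h.hom.hom.hom : Y →ₗ[ℂ] ↥p),
        Y.ρ g v ∈ LinearMap.ker (h.hom.hom.hom : Y →ₗ[ℂ] ↥p) := by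
      intro g v hv
      rw [LinearMap.mem_ker] at hv ⊢
      exact (hom_comm h g v).trans (by rw [show h.hom v = 0 from hv, map_zero])
    set ι : subRep Y _ hKinv ⟶ Y := subInc Y _ hKinv with hι
    have hcomp : ι ≫ h = 0 := by
      apply Action.Hom.ext
      rw [Action.comp_hom, Action.zero_hom]
      ext k
      exact k.2
    have hι0 : ι = 0 := (cancel_mono h).mp (by rw [hcomp, Limits.zero_comp])
    have hinj : Function.Injective (h.hom.hom.hom : Y →ₗ[ℂ] ↥p) := by
      rw [← LinearMap.ker_eq_bot]
      rw [Submodule.eq_bot_iff]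
      intro v hv
      exact congrArg (fun φ : subRep Y _ hKinv ⟶ Y =>
        φ.hom (⟨v, hv⟩ : ↥(LinearMap.ker h.hom.hom.hom))) hι0
    -- conclude iso
    let e : Y ≃ₗ[ℂ] ↥p := LinearEquiv.ofBijective (h.hom.hom.hom : Y →ₗ[ℂ] ↥p) ⟨hinj, hsurj⟩
    haveI : IsIso h.hom := by
      refine ⟨⟨FGModuleCat.ofHom (e.symm : ↥p →ₗ[ℂ] Y), ?_, ?_⟩⟩
      · ext v
        exact e.symm_apply_apply v
      · ext w
        exact e.apply_symm_apply w
    infer_instance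

section Induced

variable (lam : ↥(Subgroup.center G) →* ℂˣ)

/-- right translation operator -/
def tr (g : G) : (G → ℂ) →ₗ[ℂ] (G → ℂ) where
  toFun f := fun x => f (x * g)
  map_add' f₁ f₂ := rfl
  map_smul' c f := rfl

/-- the induced module: functions semi-invariant under the center -/
def indM : Submodule ℂ (G → ℂ) where
  carrier := {f | ∀ (z : ↥(Subgroup.center G)) (x : G), f ((z : G) * x) = (lam z : ℂ) * f x}
  add_mem' := fun hf hg z x => by
    simp only [Pi.add_apply, hf z x, hg z x]; ring
  zero_mem' := fun z x => by simp
  smul_mem' := fun c f hf z x => by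
    simp only [Pi.smul_apply, hf z x, smul_eq_mul]; ring

lemma tr_mem_indM (g : G) (f : G → ℂ) (hf : f ∈ indM lam) : tr g f ∈ indM lam := by
  intro z x
  show f ((z : G) * x * g) = (lam z : ℂ) * f (x * g)
  rw [mul_assoc]
  exact hf z (x * g)

/-- the induced representation -/
def indRep : FDRep ℂ G :=
  FDRep.of (V := ↥(indM lam))
    { toFun := fun g => (tr g).restrict (fun f hf => tr_mem_indM lam g f hf)
      map_one' := by
        ext f
        show f.1 (_ * 1) = f.1 _
        rw [mul_one]
      map_mul' := by
        intro g h
        ext f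
        show f.1 (_ * (g * h)) = f.1 (_ * g * h)
        rw [mul_assoc] }

lemma indRep_central (z : ↥(Subgroup.center G)) :
    (indRep lam).ρ (z : G) = ((lam z : ℂ)) • (LinearMap.id : ↥(indM lam) →ₗ[ℂ] ↥(indM lam)) := by
  ext f
  apply Subtype.ext
  funext x
  show f.1 (x * (z : G)) = ((lam z : ℂ) • f).1 x
  rw [show x * (z : G) = (z : G) * x from Subgroup.mem_center_iff.mp z.2 x]
  exact f.2 z x

/-- a nonzero vector in the induced representation -/
def indVec : ↥(indM lam) := by
  classical
  refine ⟨fun g => if h : g ∈ Subgroup.center G then (lam ⟨g, h⟩ : ℂ) else 0, ?_⟩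
  intro z x
  by_cases hx : x ∈ Subgroup.center G
  · have hzx : (z : G) * x ∈ Subgroup.center G := mul_mem z.2 hx
    simp only [dif_pos hx, dif_pos hzx]
    rw [show (⟨(z : G) * x, hzx⟩ : ↥(Subgroup.center G)) = z * ⟨x, hx⟩ from rfl, map_mul]
    push_cast
    ring
  · have hzx : (z : G) * x ∉ Subgroup.center G := by
      intro hmem
      exact hx (by simpa using mul_mem (inv_mem z.2) hmem)
    simp only [dif_pos, dif_neg hx, dif_neg hzx, mul_zero]

lemma indVec_ne_zero : indVec lam ≠ 0 := by
  intro h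
  have h1 := congrArg (fun f : ↥(indM lam) => f.1 1) h
  simp only [indVec] at h1
  rw [dif_pos (Subgroup.center G).one_mem] at h1
  rw [show (⟨(1 : G), (Subgroup.center G).one_mem⟩ : ↥(Subgroup.center G)) = 1 from rfl] at h1
  simp at h1

end Induced

lemma nontrivial_of_simple (V : FDRep ℂ G) [Simple V] : Nontrivial V := by
  by_contra hn
  rw [not_nontrivial_iff_subsingleton] at hn
  refine CategoryTheory.id_nonzero V ?_
  apply Action.Hom.ext
  ext v
  exact @Subsingleton.elim _ hn _ _

lemma scalar_unique (V : FDRep ℂ G) [Simple V] {c c' : ℂ}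
    (h : c • (LinearMap.id : V →ₗ[ℂ] V) = c' • LinearMap.id) : c = c' := by
  haveI := nontrivial_of_simple V
  obtain ⟨v, hv⟩ := exists_ne (0 : V)
  have := congrArg (fun φ : V →ₗ[ℂ] V => φ v) h
  simp only [LinearMap.smul_apply, LinearMap.id_apply] at this
  by_contra hcc
  exact hv (by
    have := sub_eq_zero.mpr this
    rw [← sub_smul] at this
    rcases smul_eq_zero.mp this with h' | h'
    · exact absurd (sub_eq_zero.mp h') hcc
    · exact h')

lemma char_one_ne_zero (V : FDRep ℂ G) [Simple V] : V.character 1 ≠ 0 := by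
  haveI := nontrivial_of_simple V
  rw [FDRep.char_one]
  exact_mod_cast (Module.finrank_pos (R := ℂ) (M := V)).ne'

lemma exists_irr_of_char (lam : ↥(Subgroup.center G) →* ℂˣ) :
    ∃ V : FDRep ℂ G, Simple V ∧
      ∀ z : ↥(Subgroup.center G), V.ρ (z : G) = ((lam z : ℂ)) •
        (LinearMap.id : V →ₗ[ℂ] V) := by
  obtain ⟨V, hs, f, v, hv⟩ := exists_simple_sub (indRep lam) (indVec lam) (indVec_ne_zero lam)
  haveI := hs
  refine ⟨V, hs, fun z => ?_⟩
  obtain ⟨c, hc⟩ := central_scalar V z.2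
  have h1 := hom_comm f (z : G) v
  rw [hc] at h1
  rw [indRep_central lam z] at h1
  simp only [LinearMap.smul_apply, LinearMap.id_apply, map_smul] at h1
  have h1' : c • f.hom v = (lam z : ℂ) • f.hom v := h1
  have hcl : c = (lam z : ℂ) := by
    by_contra hne
    apply hv
    have h2 := sub_eq_zero.mpr h1'
    rw [← sub_smul] at h2
    rcases smul_eq_zero.mp h2 with h' | h'
    · exact absurd (sub_eq_zero.mp h') hne
    · exact h'
  rw [hc, hcl]

lemma smul_id_mul (c d : ℂ) (V : FDRep ℂ G) :
    (c • (LinearMap.id : V →ₗ[ℂ] V)) * (d • LinearMap.id) = (c * d) • LinearMap.id := by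
  ext v
  simp [smul_smul]
  ring_nf

lemma exists_char_of_irr (V : FDRep ℂ G) [Simple V] :
    ∃ mu : ↥(Subgroup.center G) →* ℂˣ,
      ∀ z : ↥(Subgroup.center G), V.ρ (z : G) = ((mu z : ℂ)) •
        (LinearMap.id : V →ₗ[ℂ] V) := by
  choose c hc using fun z : ↥(Subgroup.center G) => central_scalar V z.2
  have hmul : ∀ z w, c (z * w) = c z * c w := by
    intro z w
    apply scalar_unique V
    rw [← hc (z * w)]
    push_cast
    rw [map_mul, hc z, hc w, smul_id_mul]
  have hone : c 1 = 1 := by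
    apply scalar_unique V
    rw [← hc 1, OneMemClass.coe_one, map_one]
    ext v; simp
  have hinv : ∀ z, c z * c z⁻¹ = 1 := fun z => by
    rw [← hmul, mul_inv_cancel, hone]
  refine ⟨MonoidHom.mk' (fun z => Units.mk (c z) (c z⁻¹) (hinv z)
    (by rw [mul_comm]; exact hinv z)) (fun a b => Units.ext (hmul a b)), fun z => hc z⟩

theorem stmt_17' {G : Type} [Group G] [Fintype G]
    (hZbot : Subgroup.center G ≠ ⊥) (hZtop : Subgroup.center G ≠ ⊤)
    (hCP : ∀ g : G, g ∉ Subgroup.center G →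
      ∀ z ∈ Subgroup.center G, IsConj g (g * z)) :
    (∀ χ : G → ℂ, (∃ V : FDRep ℂ G, CategoryTheory.Simple V ∧ χ = V.character) →
        (∃ z ∈ Subgroup.center G, χ z ≠ χ 1) →
      (∀ g : G, g ∉ Subgroup.center G → χ g = 0) ∧
        χ 1 ^ 2 = ((Subgroup.center G).index : ℂ)) ∧
    Nat.card {χ : G → ℂ // (∃ V : FDRep ℂ G, CategoryTheory.Simple V ∧ χ = V.character)
        ∧ ∃ z ∈ Subgroup.center G, χ z ≠ χ 1} =
      Nat.card ↥(Subgroup.center G) - 1 := by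
  constructor
  · rintro χ ⟨V, hS, rfl⟩ hz
    haveI := hS
    exact part1 hCP V hz
  · have hPhi : ∀ _lam : {lam : ↥(Subgroup.center G) →* ℂˣ // lam ≠ 1},
        ∃ χ : {χ : G → ℂ // (∃ V : FDRep ℂ G, CategoryTheory.Simple V ∧ χ = V.character)
            ∧ ∃ z ∈ Subgroup.center G, χ z ≠ χ 1},
          (χ.1 1 ≠ 0) ∧
            ∀ z : ↥(Subgroup.center G), χ.1 (z : G) = (_lam.1 z : ℂ) * χ.1 1 := by
      rintro ⟨lam, hlam⟩
      obtain ⟨V, hs, hsc⟩ := exists_irr_of_char lam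
      haveI := hs
      have hchi : ∀ z : ↥(Subgroup.center G),
          V.character (z : G) = (lam z : ℂ) * V.character 1 := fun z => by
        simpa using char_smul V (hsc z) 1
      have h1 : V.character 1 ≠ 0 := char_one_ne_zero V
      obtain ⟨z, hzne⟩ := DFunLike.ne_iff.mp hlam
      have hne : V.character (z : G) ≠ V.character 1 := by
        rw [hchi z]
        intro h
        have h2 : ((lam z : ℂ) - 1) * V.character 1 = 0 := by linear_combination h
        rcases mul_eq_zero.mp h2 with h' | h'
        · exact hzne (Units.ext (by simpa using sub_eq_zero.mp h'))
        · exact h1 h'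
      exact ⟨⟨V.character, ⟨V, hs, rfl⟩, ⟨(z : G), z.2, hne⟩⟩, h1, hchi⟩
    choose Φ hΦ0 hΦ using hPhi
    have hbij : Function.Bijective Φ := by
      constructor
      · rintro l1 l2 heq
        apply Subtype.ext; apply MonoidHom.ext; intro z
        apply Units.ext
        have e1 := hΦ l1 z
        have e2 := hΦ l2 z
        rw [heq] at e1
        exact mul_right_cancel₀ (hΦ0 l2) (e1.symm.trans e2)
      · rintro ⟨χ, ⟨V, hs, hrfl⟩, z₀, hz₀m, hz₀⟩
        haveI := hs
        subst hrfl
        obtain ⟨mu, hmu⟩ := exists_char_of_irr V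
        have hchiV : ∀ z : ↥(Subgroup.center G),
            V.character (z : G) = (mu z : ℂ) * V.character 1 := fun z => by
          simpa using char_smul V (hmu z) 1
        have hone : V.character 1 ≠ 0 := char_one_ne_zero V
        have hc₀ : mu ⟨z₀, hz₀m⟩ ≠ 1 := by
          intro h
          apply hz₀
          have := hchiV ⟨z₀, hz₀m⟩
          rw [h] at this
          simpa using this
        have hmune : mu ≠ 1 := by
          intro h
          exact hc₀ (by rw [h]; rfl)
        refine ⟨⟨mu, hmune⟩, ?_⟩
        set lam : {lam : ↥(Subgroup.center G) →* ℂˣ // lam ≠ 1} := ⟨mu, hmune⟩ with hlamdef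
        obtain ⟨⟨V', hs', hrfl'⟩, hzv'⟩ := (Φ lam).2
        haveI := hs'
        -- part1 for both
        have hp' := part1 hCP V' (hrfl' ▸ hzv')
        have hp := part1 hCP V ⟨z₀, hz₀m, hz₀⟩
        -- degrees are equal
        have hdeg : (Φ lam).1 1 = V.character 1 := by
          have h2 := hp'.2
          have h3 := hp.2
          rw [FDRep.char_one] at h2 h3
          have hsq : ((Module.finrank ℂ V' : ℂ)) ^ 2 = ((Module.finrank ℂ V : ℂ)) ^ 2 :=
            h2.trans h3.symm
          have hnat : (Module.finrank ℂ V') ^ 2 = (Module.finrank ℂ V) ^ 2 := by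
            exact_mod_cast hsq
          have hfr := Nat.pow_left_injective (two_ne_zero) hnat
          rw [hrfl', FDRep.char_one, FDRep.char_one]
          exact_mod_cast congrArg (Nat.cast (R := ℂ)) hfr
        apply Subtype.ext
        funext g
        by_cases hg : g ∈ Subgroup.center G
        · have e1 := hΦ lam ⟨g, hg⟩
          have e2 := hchiV ⟨g, hg⟩
          simp only at e1 e2
          rw [e1, hdeg, ← e2]
        · have v1 : (Φ lam).1 g = 0 := by
            rw [hrfl']
            exact hp'.1 g hg
          rw [v1]
          exact (hp.1 g hg).symm
    have hcount := Nat.card_eq_of_bijective Φ hbij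
    rw [← hcount]
    -- now count the nontrivial characters of the center
    haveI : NeZero ((Monoid.exponent ↥(Subgroup.center G) : ℂ)) :=
      ⟨Nat.cast_ne_zero.mpr Monoid.exponent_ne_zero_of_finite⟩
    letI : CommGroup ↥(Subgroup.center G) :=
      { (inferInstance : Group ↥(Subgroup.center G)) with
        mul_comm := fun a b => Subtype.ext (Subgroup.mem_center_iff.mp b.2 a) }
    obtain ⟨e⟩ := CommGroup.monoidHom_mulEquiv_of_hasEnoughRootsOfUnity
      ↥(Subgroup.center G) ℂ
    have he : ∀ lam : ↥(Subgroup.center G) →* ℂˣ, lam ≠ 1 ↔ e lam ≠ 1 :=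
      fun lam => (not_congr (MulEquiv.map_eq_one_iff e)).symm
    have e' : {lam : ↥(Subgroup.center G) →* ℂˣ // lam ≠ 1} ≃
        {z : ↥(Subgroup.center G) // z ≠ 1} :=
      Equiv.subtypeEquiv e.toEquiv he
    rw [Nat.card_congr e']
    classical
    rw [Nat.card_eq_fintype_card, Nat.card_eq_fintype_card]
    exact Set.card_ne_eq _

end
end Stmt17Aux

theorem stmt_17 {G : Type} [Group G] [Fintype G]
    (hZbot : Subgroup.center G ≠ ⊥) (hZtop : Subgroup.center G ≠ ⊤)
    (hCP : ∀ g : G, g ∉ Subgroup.center G →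
      ∀ z ∈ Subgroup.center G, IsConj g (g * z)) :
    (∀ χ : G → ℂ, IsIrrChar G χ → (∃ z ∈ Subgroup.center G, χ z ≠ χ 1) →
      (∀ g : G, g ∉ Subgroup.center G → χ g = 0) ∧
        χ 1 ^ 2 = ((Subgroup.center G).index : ℂ)) ∧
    Nat.card {χ : G → ℂ // IsIrrChar G χ ∧ ∃ z ∈ Subgroup.center G, χ z ≠ χ 1} =
      Nat.card ↥(Subgroup.center G) - 1 := by
  exact Stmt17Aux.stmt_17' hZbot hZtop hCP
end
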